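/- arXiv:1809.05137 — 7 statements merged into one kernel-verified Lean document; each statement's English description precedes it below -/
import Mathlib

section
/- Let m ≥ 1 and let χ be a primitive even character mod u^{m+1}, with associated function ψ_χ on monic polynomials of 𝔽_q[T]. Then the following identity of formal power series in ℂ[[t]] holds: (1 − t) · Σ_{d=0}^∞ (Σ_{f ∈ 𝔽_q[T] monic, deg f = d} ψ_χ(f)) · t^d = Σ_{d=0}^∞ (Σ_{f ∈ 𝔽_q[u] monic, deg f = d, f(0) ≠ 0} χ(f mod u^{m+1})) · t^d. -/
open Polynomial

open Classical in
/-- Evaluate a character of the unit group on a ring element: `χ x` if `x` is a unit, else `0`. -/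
noncomputable def charVal {R : Type*} [Monoid R] (χ : Rˣ →* ℂˣ) (x : R) : ℂ :=
  if h : IsUnit x then ((χ h.unit : ℂˣ) : ℂ) else 0

/-- The quotient ring `𝔽_q[u]/(u^{m+1})`. -/
abbrev ModRing (Fq : Type) [Field Fq] (m : ℕ) : Type :=
  Fq[X] ⧸ Ideal.span {(X : Fq[X]) ^ (m + 1)}

/-- A character mod `u^{m+1}` is primitive and even if it is trivial on the nonzero constants
and nontrivial on the residues of elements `1 + a·u^m`. -/
def IsPrimitiveEven (Fq : Type) [Field Fq] (m : ℕ) (χ : (ModRing Fq m)ˣ →* ℂˣ) : Prop :=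
  (∀ a : Fq, a ≠ 0 →
      charVal χ (Ideal.Quotient.mk (Ideal.span {(X : Fq[X]) ^ (m + 1)}) (C a)) = 1) ∧
  (∃ a : Fq,
      charVal χ (Ideal.Quotient.mk (Ideal.span {(X : Fq[X]) ^ (m + 1)}) (1 + C a * X ^ m)) ≠ 1)

/-- `ψ_χ(f) = χ(rev f mod u^{m+1})` where `rev f = u^{deg f}·f(1/u)`. -/
noncomputable def psiChar {Fq : Type} [Field Fq] (m : ℕ) (χ : (ModRing Fq m)ˣ →* ℂˣ)
    (f : Fq[X]) : ℂ :=
  charVal χ (Ideal.Quotient.mk (Ideal.span {(X : Fq[X]) ^ (m + 1)}) f.reverse)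

/-- `c_d(ψ_χ)`: the sum of `ψ_χ` over monic polynomials of degree `d`. -/
noncomputable def psiCoeff {Fq : Type} [Field Fq] (m : ℕ) (χ : (ModRing Fq m)ˣ →* ℂˣ)
    (d : ℕ) : ℂ :=
  ∑ᶠ f ∈ {f : Fq[X] | f.Monic ∧ f.natDegree = d}, psiChar m χ f

/-- `L(s, ψ_χ) = Σ_{d=0}^{m-1} c_d(ψ_χ)·q^{-ds}`. -/
noncomputable def Lpsi {Fq : Type} [Field Fq] [Fintype Fq] (m : ℕ)
    (χ : (ModRing Fq m)ˣ →* ℂˣ) (s : ℂ) : ℂ :=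
  ∑ d ∈ Finset.range m, psiCoeff m χ d * (Fintype.card Fq : ℂ) ^ (-(d : ℂ) * s)

/-- The root number `ε_{ψ_χ} = q^{-(m-1)/2}·c_{m-1}(ψ_χ)`. -/
noncomputable def epsPsi {Fq : Type} [Field Fq] [Fintype Fq] (m : ℕ)
    (χ : (ModRing Fq m)ˣ →* ℂˣ) : ℂ :=
  (Fintype.card Fq : ℂ) ^ (-(((m : ℂ) - 1) / 2)) * psiCoeff m χ (m - 1)

section A
variable {Fq : Type} [Field Fq] [Fintype Fq] {m : ℕ}

lemma finite_S (d : ℕ) (P : Fq[X] → Prop) :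
    {f : Fq[X] | f.Monic ∧ f.natDegree = d ∧ P f}.Finite := by
  have h : {f : Fq[X] | f.Monic ∧ f.natDegree = d ∧ P f} ⊆ {f : Fq[X] | f.natDegree ≤ d} := by
    rintro f ⟨-, h, -⟩; exact h.le
  refine Set.Finite.subset ?_ h
  apply Set.Finite.of_finite_image (f := fun f (i : Fin (d+1)) => f.coeff i)
    (Set.toFinite _)
  rintro f hf g hg hfg
  ext n
  rcases le_or_gt n d with hn | hn
  · exact congrFun hfg ⟨n, Nat.lt_succ_of_le hn⟩
  · rw [coeff_eq_zero_of_natDegree_lt (lt_of_le_of_lt hf hn),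
      coeff_eq_zero_of_natDegree_lt (lt_of_le_of_lt hg hn)]

lemma isUnit_mk {f : Fq[X]} (h : f.coeff 0 ≠ 0) :
    IsUnit (Ideal.Quotient.mk (Ideal.span {(X : Fq[X]) ^ (m + 1)}) f) := by
  set mk := Ideal.Quotient.mk (Ideal.span {(X : Fq[X]) ^ (m + 1)})
  have h1 : IsNilpotent (mk (f - C (f.coeff 0))) := by
    refine ⟨m+1, ?_⟩
    rw [← map_pow, Ideal.Quotient.eq_zero_iff_mem, Ideal.mem_span_singleton]
    exact pow_dvd_pow_of_dvd (X_dvd_iff.2 (by simp)) _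
  have h2 : IsUnit (mk (C (f.coeff 0))) := by
    refine IsUnit.of_mul_eq_one (mk (C (f.coeff 0)⁻¹)) ?_
    rw [← map_mul, ← C_mul, mul_inv_cancel₀ h, C_1, map_one]
  have := h1.isUnit_add_right_of_commute h2 (Commute.all _ _)
  rw [← map_add, sub_add_cancel] at this
  exact this

lemma charVal_mul' (χ : (ModRing Fq m)ˣ →* ℂˣ) {x y : ModRing Fq m}
    (hx : IsUnit x) (hy : IsUnit y) :
    charVal χ (x * y) = charVal χ x * charVal χ y := by
  rw [charVal, charVal, charVal, dif_pos hx, dif_pos hy, dif_pos (hx.mul hy)]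
  rw [← Units.val_mul, ← map_mul]
  congr 2
  ext
  simp

lemma reverse_reverse' {f : Fq[X]} (h : f.coeff 0 ≠ 0) : f.reverse.reverse = f := by
  have hd : f.reverse.natDegree = f.natDegree := by
    rw [reverse_natDegree, natTrailingDegree_eq_zero.2 (Or.inr h), Nat.sub_zero]
  ext n
  rw [coeff_reverse, coeff_reverse, hd, revAt_invol]

lemma finite_S2 (d : ℕ) : {f : Fq[X] | f.Monic ∧ f.natDegree = d}.Finite := by
  have := finite_S (Fq := Fq) d (fun _ => True)
  simpa using this

lemma finite_S3 (d : ℕ) :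
    {f : Fq[X] | f.Monic ∧ f.natDegree = d ∧ Polynomial.eval 0 f ≠ 0}.Finite :=
  finite_S d _

lemma psiChar_X_mul (χ : (ModRing Fq m)ˣ →* ℂˣ) (g : Fq[X]) :
    psiChar m χ (X * g) = psiChar m χ g := by
  unfold psiChar
  rw [reverse_X_mul]

lemma stepA (χ : (ModRing Fq m)ˣ →* ℂˣ) (e : ℕ) :
    ∑ f ∈ (finite_S2 (Fq := Fq) (e+1)).toFinset, psiChar m χ f =
      (∑ f ∈ (finite_S3 (Fq := Fq) (e+1)).toFinset, psiChar m χ f) +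
      ∑ f ∈ (finite_S2 (Fq := Fq) e).toFinset, psiChar m χ f := by
  classical
  rw [← Finset.sum_filter_add_sum_filter_not (finite_S2 (Fq := Fq) (e+1)).toFinset
    (fun f => Polynomial.eval 0 f ≠ 0)]
  congr 1
  · apply Finset.sum_congr _ (fun _ _ => rfl)
    ext f
    simp only [Finset.mem_filter, Set.Finite.mem_toFinset, Set.mem_setOf_eq]
    tauto
  · have himg : (finite_S2 (Fq := Fq) (e+1)).toFinset.filter
        (fun f => ¬ Polynomial.eval 0 f ≠ 0) =
        (finite_S2 (Fq := Fq) e).toFinset.image (fun g => X * g) := by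
      ext f
      simp only [Finset.mem_filter, Finset.mem_image, Set.Finite.mem_toFinset,
        Set.mem_setOf_eq, not_not]
      constructor
      · rintro ⟨⟨hmon, hdeg⟩, h0⟩
        have hc0 : f.coeff 0 = 0 := by rw [coeff_zero_eq_eval_zero, h0]
        have hXdiv : X * f.divX = f := by
          have := X_mul_divX_add f
          rwa [hc0, C_0, add_zero] at this
        have hdvx0 : f.divX ≠ 0 := by
          intro h
          rw [h, mul_zero] at hXdiv
          exact hmon.ne_zero hXdiv.symm
        have hmon' : f.divX.Monic := by
          have : f.leadingCoeff = X.leadingCoeff * f.divX.leadingCoeff := by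
            rw [← leadingCoeff_mul, hXdiv]
          rw [hmon.leadingCoeff, leadingCoeff_X, one_mul] at this
          exact this.symm
        refine ⟨f.divX, ⟨hmon', ?_⟩, hXdiv⟩
        rw [natDegree_divX_eq_natDegree_tsub_one, hdeg]; omega
      · rintro ⟨g, ⟨hg, hgd⟩, rfl⟩
        refine ⟨⟨monic_X.mul hg, ?_⟩, ?_⟩
        · rw [monic_X.natDegree_mul hg, natDegree_X, hgd, add_comm]
        · simp
    rw [himg, Finset.sum_image (fun x _ y _ h => mul_left_cancel₀ X_ne_zero h)]
    exact Finset.sum_congr rfl (fun g _ => psiChar_X_mul χ g)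

lemma stepB (χ : (ModRing Fq m)ˣ →* ℂˣ)
    (hχ1 : ∀ a : Fq, a ≠ 0 →
      charVal χ (Ideal.Quotient.mk (Ideal.span {(X : Fq[X]) ^ (m + 1)}) (C a)) = 1)
    (d : ℕ) :
    ∑ f ∈ (finite_S3 (Fq := Fq) d).toFinset, psiChar m χ f =
      ∑ f ∈ (finite_S3 (Fq := Fq) d).toFinset,
        charVal χ (Ideal.Quotient.mk (Ideal.span {(X : Fq[X]) ^ (m + 1)}) f) := by
  set mk := Ideal.Quotient.mk (Ideal.span {(X : Fq[X]) ^ (m + 1)}) with hmk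
  set φ : Fq[X] → Fq[X] := fun f => C (f.coeff 0)⁻¹ * f.reverse with hφ
  have key : ∀ f : Fq[X], f.Monic → f.natDegree = d → f.coeff 0 ≠ 0 →
      ((φ f).Monic ∧ (φ f).natDegree = d ∧ (φ f).coeff 0 = (f.coeff 0)⁻¹) ∧
      φ (φ f) = f ∧ psiChar m χ f = charVal χ (mk (φ f)) := by
    intro f hmon hdeg ha
    have htc : f.trailingCoeff = f.coeff 0 := by
      rw [trailingCoeff, natTrailingDegree_eq_zero.2 (Or.inr ha)]
    have hrevdeg : f.reverse.natDegree = d := by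
      rw [reverse_natDegree, natTrailingDegree_eq_zero.2 (Or.inr ha), Nat.sub_zero, hdeg]
    have hrev0 : f.reverse.coeff 0 = 1 := by
      rw [coeff_zero_reverse, hmon.leadingCoeff]
    have hφmon : (φ f).Monic := by
      show (C (f.coeff 0)⁻¹ * f.reverse).leadingCoeff = 1
      rw [leadingCoeff_mul, leadingCoeff_C, reverse_leadingCoeff, htc,
        inv_mul_cancel₀ ha]
    have hφdeg : (φ f).natDegree = d := by
      show (C (f.coeff 0)⁻¹ * f.reverse).natDegree = d
      rw [natDegree_C_mul (inv_ne_zero ha), hrevdeg]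
    have hφ0 : (φ f).coeff 0 = (f.coeff 0)⁻¹ := by
      show (C (f.coeff 0)⁻¹ * f.reverse).coeff 0 = _
      rw [coeff_C_mul, hrev0, mul_one]
    have hφφ : φ (φ f) = f := by
      have h1 : (φ f).reverse = C (f.coeff 0)⁻¹ * f := by
        show (C (f.coeff 0)⁻¹ * f.reverse).reverse = _
        rw [reverse_mul_of_domain, reverse_C, reverse_reverse' ha]
      show C ((φ f).coeff 0)⁻¹ * (φ f).reverse = f
      rw [hφ0, h1, inv_inv, ← mul_assoc, ← C_mul, mul_inv_cancel₀ ha, C_1, one_mul]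
    refine ⟨⟨hφmon, hφdeg, hφ0⟩, hφφ, ?_⟩
    have hsplit : f.reverse = C (f.coeff 0) * φ f := by
      show f.reverse = C (f.coeff 0) * (C (f.coeff 0)⁻¹ * f.reverse)
      rw [← mul_assoc, ← C_mul, mul_inv_cancel₀ ha, C_1, one_mul]
    have hu1 : IsUnit (mk (C (f.coeff 0))) := isUnit_mk (by simpa using ha)
    have hu2 : IsUnit (mk (φ f)) := isUnit_mk (by rw [hφ0]; exact inv_ne_zero ha)
    rw [psiChar, ← hmk, hsplit, map_mul, charVal_mul' χ hu1 hu2, hχ1 _ ha, one_mul]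
  refine Finset.sum_nbij' φ φ ?_ ?_ ?_ ?_ ?_
  all_goals
    intro f hf
    rw [Set.Finite.mem_toFinset, Set.mem_setOf_eq] at hf
    obtain ⟨hmon, hdeg, h0⟩ := hf
    rw [← coeff_zero_eq_eval_zero] at h0
    obtain ⟨⟨h1, h2, h3⟩, h4, h5⟩ := key f hmon hdeg h0
  case _ =>
    rw [Set.Finite.mem_toFinset, Set.mem_setOf_eq]
    exact ⟨h1, h2, by rw [← coeff_zero_eq_eval_zero, h3]; exact inv_ne_zero h0⟩
  case _ =>
    rw [Set.Finite.mem_toFinset, Set.mem_setOf_eq]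
    exact ⟨h1, h2, by rw [← coeff_zero_eq_eval_zero, h3]; exact inv_ne_zero h0⟩
  case _ => exact h4
  case _ => exact h4
  case _ => exact h5

end A

theorem stmt_8 (Fq : Type) [Field Fq] [Fintype Fq] (m : ℕ) (hm : 1 ≤ m)
    (χ : (ModRing Fq m)ˣ →* ℂˣ) (hχ : IsPrimitiveEven Fq m χ) :
    ((1 : PowerSeries ℂ) - PowerSeries.X) *
        PowerSeries.mk (fun d =>
          ∑ᶠ f ∈ {f : Fq[X] | f.Monic ∧ f.natDegree = d}, psiChar m χ f) =
      PowerSeries.mk (fun d =>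
        ∑ᶠ f ∈ {f : Fq[X] | f.Monic ∧ f.natDegree = d ∧ Polynomial.eval 0 f ≠ 0},
          charVal χ (Ideal.Quotient.mk (Ideal.span {(X : Fq[X]) ^ (m + 1)}) f)) := by
  have hfin2 := fun d => finite_S2 (Fq := Fq) d
  have hfin3 := fun d => finite_S3 (Fq := Fq) d
  ext d
  rw [sub_mul, one_mul, map_sub, PowerSeries.coeff_mk]
  have hrw2 : ∀ d : ℕ, (∑ᶠ f ∈ {f : Fq[X] | f.Monic ∧ f.natDegree = d}, psiChar m χ f)
      = ∑ f ∈ (hfin2 d).toFinset, psiChar m χ f :=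
    fun d => finsum_mem_eq_finite_toFinset_sum _ (hfin2 d)
  have hrw3 : ∀ d : ℕ,
      (∑ᶠ f ∈ {f : Fq[X] | f.Monic ∧ f.natDegree = d ∧ Polynomial.eval 0 f ≠ 0},
        charVal χ (Ideal.Quotient.mk (Ideal.span {(X : Fq[X]) ^ (m + 1)}) f))
      = ∑ f ∈ (hfin3 d).toFinset,
          charVal χ (Ideal.Quotient.mk (Ideal.span {(X : Fq[X]) ^ (m + 1)}) f) :=
    fun d => finsum_mem_eq_finite_toFinset_sum _ (hfin3 d)
  cases d with
  | zero =>
    rw [PowerSeries.coeff_zero_X_mul, sub_zero, PowerSeries.coeff_mk]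
    have hS0 : {f : Fq[X] | f.Monic ∧ f.natDegree = 0} = {(1 : Fq[X])} := by
      ext f
      simp only [Set.mem_setOf_eq, Set.mem_singleton_iff]
      constructor
      · rintro ⟨hmon, hdeg⟩; exact hmon.natDegree_eq_zero.1 hdeg
      · rintro rfl; exact ⟨monic_one, natDegree_one⟩
    have hT0 : {f : Fq[X] | f.Monic ∧ f.natDegree = 0 ∧ Polynomial.eval 0 f ≠ 0}
        = {(1 : Fq[X])} := by
      ext f
      simp only [Set.mem_setOf_eq, Set.mem_singleton_iff]
      constructor
      · rintro ⟨hmon, hdeg, -⟩; exact hmon.natDegree_eq_zero.1 hdeg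
      · rintro rfl; exact ⟨monic_one, natDegree_one, by simp⟩
    rw [hS0, hT0, finsum_mem_singleton, finsum_mem_singleton]
    unfold psiChar
    congr 1
    rw [← C_1, reverse_C]
  | succ e =>
    rw [PowerSeries.coeff_succ_X_mul, PowerSeries.coeff_mk, PowerSeries.coeff_mk,
      hrw2, hrw2, hrw3, stepA χ e, stepB χ hχ.1 (e+1), add_sub_cancel_right]
end

section
/- Let m ≥ 1, let χ be a primitive even character mod u^{m+1}, and let ψ = ψ_χ. Let ψ̄ = ψ_{χ̄} be the function associated to the complex-conjugate character χ̄ (which is also primitive and even). Then for every s ∈ ℂ, the functional equation L(s, ψ) = ε_ψ · q^{(m−1)(1/2−s)} · L(1−s, ψ̄) holds, where q^z denotes exp(z·log q) for z ∈ ℂ. -/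
open Polynomial

/-- The complex-conjugate character `χ̄` of `χ`. -/
noncomputable def conjChar {Fq : Type} [Field Fq] {m : ℕ}
    (χ : (ModRing Fq m)ˣ →* ℂˣ) : (ModRing Fq m)ˣ →* ℂˣ :=
  (Units.map (starRingEnd ℂ).toMonoidHom).comp χ

namespace FE
variable {Fq : Type} [Field Fq] {m : ℕ}

/-- `1 + b₀ X + b₁ X² + ⋯ + b_{n-1} X^n`. -/
noncomputable def Pb (Fq : Type) [Field Fq] (n : ℕ) (b : Fin n → Fq) : Fq[X] :=
  1 + ∑ j : Fin n, C (b j) * X ^ ((j : ℕ) + 1)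

noncomputable def F (χ : (ModRing Fq m)ˣ →* ℂˣ) (p : Fq[X]) : ℂ :=
  charVal χ (Ideal.Quotient.mk (Ideal.span {(X : Fq[X]) ^ (m + 1)}) p)

noncomputable def S [Fintype Fq] (χ : (ModRing Fq m)ˣ →* ℂˣ) (n : ℕ) : ℂ :=
  ∑ b : Fin n → Fq, F χ (Pb Fq n b)

lemma Pb_coeff_zero (n : ℕ) (b : Fin n → Fq) : (Pb Fq n b).coeff 0 = 1 := by
  simp [Pb, coeff_X_pow]

lemma Pb_coeff_succ (n : ℕ) (b : Fin n → Fq) (k : ℕ) :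
    (Pb Fq n b).coeff (k + 1) = if h : k < n then b ⟨k, h⟩ else 0 := by
  have : (Pb Fq n b).coeff (k + 1) =
      ∑ j : Fin n, (if k = (j : ℕ) then b j else 0) := by
    simp only [Pb, coeff_add, finset_sum_coeff, coeff_C_mul, coeff_X_pow, mul_ite, mul_one,
      mul_zero, coeff_one, if_false, add_left_inj]
    simp
  rw [this]
  by_cases h : k < n
  · rw [dif_pos h, Finset.sum_eq_single (⟨k, h⟩ : Fin n)]
    · simp
    · intro j _ hj
      rw [if_neg]
      intro hjk
      exact hj (Fin.ext hjk.symm)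
    · simp
  · rw [dif_neg h]
    apply Finset.sum_eq_zero
    intro j _
    rw [if_neg]
    intro hjk
    exact h (by omega)

lemma natDegree_Pb_le (n : ℕ) (b : Fin n → Fq) : (Pb Fq n b).natDegree ≤ n := by
  apply natDegree_le_iff_coeff_eq_zero.mpr
  intro k hk
  cases k with
  | zero => omega
  | succ k => rw [Pb_coeff_succ, dif_neg (by omega)]

lemma Pb_injective (n : ℕ) : Function.Injective (Pb Fq n) := by
  intro b b' h
  funext j
  have := congrArg (fun p => Polynomial.coeff p ((j : ℕ) + 1)) h
  simpa [Pb_coeff_succ, j.isLt] using this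

end FE

namespace FE
variable {Fq : Type} [Field Fq] {m : ℕ}

local notation "mkI" => Ideal.Quotient.mk (Ideal.span {(X : Fq[X]) ^ (m + 1)})

lemma mk_eq_mk_iff {p p' : Fq[X]} :
    (mkI p : ModRing Fq m) = mkI p' ↔ (X : Fq[X]) ^ (m + 1) ∣ p - p' := by
  rw [Ideal.Quotient.mk_eq_mk_iff_sub_mem, Ideal.mem_span_singleton]

lemma mk_eq_mk_of_coeff {p p' : Fq[X]} (h : ∀ k ≤ m, p.coeff k = p'.coeff k) :
    (mkI p : ModRing Fq m) = mkI p' := by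
  rw [mk_eq_mk_iff]
  rw [X_pow_dvd_iff]
  intro d hd
  rw [coeff_sub, h d (by omega), sub_self]

lemma coeff_eq_of_mk_eq {p p' : Fq[X]} (h : (mkI p : ModRing Fq m) = mkI p')
    {k : ℕ} (hk : k ≤ m) : p.coeff k = p'.coeff k := by
  rw [mk_eq_mk_iff] at h
  rw [X_pow_dvd_iff] at h
  have := h k (by omega)
  rw [coeff_sub, sub_eq_zero] at this
  exact this

lemma isUnit_mk_one_add {v : Fq[X]} (hv : (X : Fq[X]) ∣ v) :
    IsUnit (mkI (1 + v) : ModRing Fq m) := by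
  rw [map_add, map_one]
  apply IsNilpotent.isUnit_one_add
  refine ⟨m + 1, ?_⟩
  rw [← map_pow, Ideal.Quotient.eq_zero_iff_mem, Ideal.mem_span_singleton]
  exact pow_dvd_pow_of_dvd hv (m + 1)

lemma pow_mk_one_add_eq_one {v : Fq[X]} [Fintype Fq] (hv : (X : Fq[X]) ∣ v) :
    ∃ N : ℕ, N ≠ 0 ∧ (mkI (1 + v) : ModRing Fq m) ^ N = 1 := by
  set p := ringChar Fq with hp
  have hchar : CharP Fq p := ringChar.charP Fq
  have hprime : Fact p.Prime := ⟨CharP.char_is_prime Fq p⟩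
  refine ⟨p ^ (m + 1), pow_ne_zero _ hprime.out.pos.ne', ?_⟩
  have hc : CharP Fq[X] p := by infer_instance
  have h1 : ((1 : Fq[X]) + v) ^ p ^ (m + 1) = 1 + v ^ p ^ (m + 1) := by
    rw [add_pow_char_pow, one_pow]
  rw [← map_pow, h1, map_add, map_one]
  have : (mkI (v ^ p ^ (m + 1)) : ModRing Fq m) = 0 := by
    rw [Ideal.Quotient.eq_zero_iff_mem, Ideal.mem_span_singleton]
    calc (X : Fq[X]) ^ (m + 1) ∣ X ^ p ^ (m + 1) :=
          pow_dvd_pow _ (le_of_lt (Nat.lt_pow_self hprime.out.one_lt))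
      _ ∣ v ^ p ^ (m + 1) := pow_dvd_pow_of_dvd hv _
  rw [this, add_zero]

lemma charVal_one {R : Type*} [Monoid R] (χ : Rˣ →* ℂˣ) : charVal χ 1 = 1 := by
  rw [charVal, dif_pos isUnit_one]
  have : (isUnit_one : IsUnit (1 : R)).unit = 1 := Units.ext (by simp)
  rw [this, map_one, Units.val_one]

lemma charVal_mul {R : Type*} [Monoid R] (χ : Rˣ →* ℂˣ) {x y : R}
    (hx : IsUnit x) (hy : IsUnit y) :
    charVal χ (x * y) = charVal χ x * charVal χ y := by
  rw [charVal, charVal, charVal, dif_pos hx, dif_pos hy, dif_pos (hx.mul hy)]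
  have : (hx.mul hy).unit = hx.unit * hy.unit := Units.ext (by simp)
  rw [this, map_mul, Units.val_mul]

lemma charVal_conjChar (χ : (ModRing Fq m)ˣ →* ℂˣ) (x : ModRing Fq m) :
    charVal (conjChar χ) x = (starRingEnd ℂ) (charVal χ x) := by
  by_cases h : IsUnit x
  · rw [charVal, charVal, dif_pos h, dif_pos h]
    rfl
  · rw [charVal, charVal, dif_neg h, dif_neg h, map_zero]

lemma charVal_pow_eq_one {R : Type*} [Monoid R] (χ : Rˣ →* ℂˣ) {x : R} {N : ℕ}
    (hx : IsUnit x) (h : x ^ N = 1) : charVal χ x ^ N = 1 := by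
  rw [charVal, dif_pos hx]
  have hu : hx.unit ^ N = 1 := Units.ext (by simp [h])
  rw [← Units.val_pow_eq_pow_val, ← map_pow, hu, map_one, Units.val_one]

lemma conj_charVal_mk {v : Fq[X]} [Fintype Fq] (χ : (ModRing Fq m)ˣ →* ℂˣ)
    (hv : (X : Fq[X]) ∣ v) :
    (starRingEnd ℂ) (charVal χ (mkI (1 + v))) = (charVal χ (mkI (1 + v)))⁻¹ := by
  obtain ⟨N, hN, h⟩ := pow_mk_one_add_eq_one (m := m) hv
  have := charVal_pow_eq_one χ (isUnit_mk_one_add hv) h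
  have hnorm : ‖charVal χ (mkI (1 + v))‖ = 1 := Complex.norm_eq_one_of_pow_eq_one this hN
  rw [← Complex.inv_eq_conj hnorm]

lemma charVal_mul_conj {v : Fq[X]} [Fintype Fq] (χ : (ModRing Fq m)ˣ →* ℂˣ)
    (hv : (X : Fq[X]) ∣ v) :
    charVal χ (mkI (1 + v)) * charVal (conjChar χ) (mkI (1 + v)) = 1 := by
  rw [charVal_conjChar, conj_charVal_mk χ hv]
  apply mul_inv_cancel₀
  rw [charVal, dif_pos (isUnit_mk_one_add hv)]
  exact Units.ne_zero _

end FE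

namespace FE
variable {Fq : Type} [Field Fq] {n : ℕ}

local notation "mkJ" => Ideal.Quotient.mk (Ideal.span {(X : Fq[X]) ^ (n + 1 + 1)})

lemma X_dvd_Pb_sub_one (k : ℕ) (b : Fin k → Fq) : (X : Fq[X]) ∣ Pb Fq k b - 1 := by
  rw [Pb, add_sub_cancel_left]
  apply Finset.dvd_sum
  intro j _
  exact Dvd.dvd.mul_left (dvd_pow_self X (Nat.succ_ne_zero _)) _

lemma isUnit_mk_Pb {m : ℕ} (k : ℕ) (b : Fin k → Fq) :
    IsUnit (Ideal.Quotient.mk (Ideal.span {(X : Fq[X]) ^ (m + 1)}) (Pb Fq k b)) := by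
  have : Pb Fq k b = 1 + (Pb Fq k b - 1) := by ring
  rw [this]
  exact isUnit_mk_one_add (X_dvd_Pb_sub_one k b)

variable (χ : (ModRing Fq (n + 1))ˣ →* ℂˣ)

lemma F_congr {p p' : Fq[X]} (h : (X : Fq[X]) ^ (n + 1 + 1) ∣ p - p') : F χ p = F χ p' := by
  rw [F, F, mk_eq_mk_iff.mpr h]

lemma F_mul {p q : Fq[X]} (hp : IsUnit (mkJ p : ModRing Fq (n+1)))
    (hq : IsUnit (mkJ q : ModRing Fq (n+1))) : F χ (p * q) = F χ p * F χ q := by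
  rw [F, F, F, map_mul, charVal_mul χ hp hq]

lemma F_one : F χ 1 = 1 := by
  rw [F, map_one, charVal_one]

lemma F_U_mul (a b : Fq) :
    F χ (1 + C (a + b) * X ^ (n + 1)) =
      F χ (1 + C a * X ^ (n + 1)) * F χ (1 + C b * X ^ (n + 1)) := by
  rw [← F_mul χ (isUnit_mk_one_add (Dvd.dvd.mul_left (dvd_pow_self X (Nat.succ_ne_zero _)) _))
      (isUnit_mk_one_add (Dvd.dvd.mul_left (dvd_pow_self X (Nat.succ_ne_zero _)) _))]
  apply F_congr
  show (X : Fq[X]) ^ (n + 1 + 1) ∣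
    1 + C (a + b) * X ^ (n + 1) - (1 + C a * X ^ (n + 1)) * (1 + C b * X ^ (n + 1))
  have : (1 + C (a + b) * X ^ (n + 1)) - (1 + C a * X ^ (n + 1)) * (1 + C b * X ^ (n + 1)) =
      -((C a * C b) * (X ^ (n + 1) * X ^ (n + 1))) := by
    rw [map_add]; ring
  rw [this, ← pow_add, dvd_neg]
  exact Dvd.dvd.mul_left (pow_dvd_pow X (by omega)) _

lemma sum_U_eq_zero [Fintype Fq]
    (hχ2 : ∃ a : Fq, F χ (1 + C a * X ^ (n + 1)) ≠ 1) :
    ∑ a : Fq, F χ (1 + C a * X ^ (n + 1)) = 0 := by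
  obtain ⟨a0, ha0⟩ := hχ2
  have key : (∑ a : Fq, F χ (1 + C a * X ^ (n + 1)) * F χ (1 + C a0 * X ^ (n + 1))) =
      ∑ a : Fq, F χ (1 + C a * X ^ (n + 1)) := by
    refine Fintype.sum_equiv (Equiv.addRight a0) _ _ (fun a => ?_)
    simp only [Equiv.coe_addRight]
    rw [← F_U_mul]
  have h2 : (∑ a : Fq, F χ (1 + C a * X ^ (n + 1))) *
      (F χ (1 + C a0 * X ^ (n + 1)) - 1) = 0 := by
    rw [mul_sub, mul_one, Finset.sum_mul, key, sub_self]
  rcases mul_eq_zero.mp h2 with h | h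
  · exact h
  · exact absurd (by linear_combination h) ha0

lemma Pb_snoc (b : Fin n → Fq) (a : Fq) :
    Pb Fq (n + 1) (Fin.snoc b a) = Pb Fq n b + C a * X ^ (n + 1) := by
  rw [Pb, Pb, Fin.sum_univ_castSucc]
  simp [Fin.snoc_castSucc, Fin.snoc_last, Fin.coe_castSucc, Fin.val_last]
  ring

lemma F_Pb_snoc (b : Fin n → Fq) (a : Fq) :
    F χ (Pb Fq (n + 1) (Fin.snoc b a)) = F χ (Pb Fq n b) * F χ (1 + C a * X ^ (n + 1)) := by
  rw [Pb_snoc, ← F_mul χ (isUnit_mk_Pb n b)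
    (isUnit_mk_one_add (Dvd.dvd.mul_left (dvd_pow_self X (Nat.succ_ne_zero _)) _))]
  apply F_congr
  show (X : Fq[X]) ^ (n + 1 + 1) ∣
    Pb Fq n b + C a * X ^ (n + 1) - Pb Fq n b * (1 + C a * X ^ (n + 1))
  obtain ⟨w, hw⟩ := X_dvd_Pb_sub_one n b
  have : Pb Fq n b + C a * X ^ (n + 1) - Pb Fq n b * (1 + C a * X ^ (n + 1)) =
      -((Pb Fq n b - 1) * C a * X ^ (n + 1)) := by ring
  rw [this, dvd_neg, hw]
  refine ⟨w * C a, ?_⟩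
  ring

lemma S_full_zero [Fintype Fq]
    (hχ2 : ∃ a : Fq, F χ (1 + C a * X ^ (n + 1)) ≠ 1) :
    S χ (n + 1) = 0 := by
  rw [S, ← Equiv.sum_comp (Fin.snocEquiv (fun _ => Fq)).symm.symm
    (fun c => F χ (Pb Fq (n+1) c))]
  rw [Fintype.sum_prod_type]
  have : ∀ p : Fq × (Fin n → Fq), F χ (Pb Fq (n+1) ((Fin.snocEquiv (fun _ => Fq)) p)) =
      F χ (Pb Fq n p.2) * F χ (1 + C p.1 * X ^ (n + 1)) := by
    intro p
    have : (Fin.snocEquiv (fun _ => Fq)) p = Fin.snoc p.2 p.1 := rfl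
    rw [this, F_Pb_snoc]
  calc ∑ a : Fq, ∑ b : Fin n → Fq, F χ (Pb Fq (n+1) ((Fin.snocEquiv (fun _ => Fq)) (a, b)))
      = ∑ a : Fq, ∑ b : Fin n → Fq, F χ (Pb Fq n b) * F χ (1 + C a * X ^ (n + 1)) := by
        refine Finset.sum_congr rfl fun a _ => Finset.sum_congr rfl fun b _ => this (a, b)
    _ = ∑ a : Fq, (∑ b : Fin n → Fq, F χ (Pb Fq n b)) * F χ (1 + C a * X ^ (n + 1)) := by
        refine Finset.sum_congr rfl fun a _ => by rw [Finset.sum_mul]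
    _ = (∑ a : Fq, F χ (1 + C a * X ^ (n + 1))) * S χ n := by
        rw [← Finset.mul_sum, mul_comm, S]
    _ = 0 := by rw [sum_U_eq_zero χ hχ2, zero_mul]

end FE

namespace FE
variable {Fq : Type} [Field Fq] {n : ℕ}

open scoped Classical

local notation "mkJ" => Ideal.Quotient.mk (Ideal.span {(X : Fq[X]) ^ (n + 1 + 1)})

variable (χ : (ModRing Fq (n + 1))ˣ →* ℂˣ)

lemma inv_exists (e : ℕ) (w : Fin e → Fq) :
    ∃ g : Fq[X], (X : Fq[X]) ^ (n + 1 + 1) ∣ Pb Fq e w * g - 1 := by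
  obtain ⟨u, hu2⟩ := isUnit_mk_Pb (m := n + 1) e w
  obtain ⟨g, hg⟩ : ∃ g : Fq[X], (mkJ g : ModRing Fq (n + 1)) = ((u⁻¹ : _ˣ) : ModRing Fq (n + 1)) :=
    Ideal.Quotient.mk_surjective _
  refine ⟨g, mk_eq_mk_iff.mp ?_⟩
  rw [map_mul, hg, map_one, ← hu2, Units.mul_inv]

lemma inner_bij [Fintype Fq] (e : ℕ) (w : Fin e → Fq) :
    (∑ c ∈ Finset.univ.filter
        (fun c : Fin (n + 1) → Fq => ((Pb Fq (n + 1) c) * (Pb Fq e w)).coeff (n + 1) = 0),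
      F χ (Pb Fq (n + 1) c) * F χ (Pb Fq e w)) = S χ n := by
  obtain ⟨g, hg⟩ := inv_exists (n := n) e w
  -- multiplying by (Pb e w * g) does nothing mod X^(n+2)
  have habs : ∀ p : Fq[X], (mkJ (p * (Pb Fq e w * g)) : ModRing Fq (n+1)) = mkJ p := by
    intro p
    refine mk_eq_mk_iff.mpr ?_
    have : p * (Pb Fq e w * g) - p = p * (Pb Fq e w * g - 1) := by ring
    rw [this]
    exact Dvd.dvd.mul_left hg p
  have hg0 : g.coeff 0 = 1 := by
    have h0 := (X_pow_dvd_iff.mp hg) 0 (by omega)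
    rw [coeff_sub, coeff_one, mul_coeff_zero, Pb_coeff_zero] at h0
    simpa using sub_eq_zero.mp h0
  set φ : (Fin (n + 1) → Fq) → (Fin n → Fq) :=
    fun c j => ((Pb Fq (n + 1) c) * (Pb Fq e w)).coeff ((j : ℕ) + 1) with hφ
  set ψ : (Fin n → Fq) → (Fin (n + 1) → Fq) :=
    fun v i => ((Pb Fq n v) * g).coeff ((i : ℕ) + 1) with hψ
  -- congruence C
  have hC : ∀ v : Fin n → Fq, (mkJ (Pb Fq (n + 1) (ψ v)) : ModRing Fq (n+1)) =
      mkJ (Pb Fq n v * g) := by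
    intro v
    apply mk_eq_mk_of_coeff
    intro k hk
    match k with
    | 0 => rw [Pb_coeff_zero, mul_coeff_zero, Pb_coeff_zero, hg0, one_mul]
    | (j + 1) =>
      rw [Pb_coeff_succ, dif_pos (by omega : j < n + 1)]
  -- congruence B
  have hB : ∀ v : Fin n → Fq,
      (mkJ (Pb Fq (n + 1) (ψ v) * Pb Fq e w) : ModRing Fq (n+1)) = mkJ (Pb Fq n v) := by
    intro v
    have h1 : (mkJ (Pb Fq (n + 1) (ψ v) * Pb Fq e w) : ModRing Fq (n+1)) =
        mkJ (Pb Fq n v * g * Pb Fq e w) := by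
      rw [map_mul, map_mul, hC v]
    rw [h1]
    have h2 : Pb Fq n v * g * Pb Fq e w = Pb Fq n v * (Pb Fq e w * g) := by ring
    rw [h2, habs]
  -- congruence A
  have hA : ∀ c ∈ Finset.univ.filter
      (fun c : Fin (n + 1) → Fq => ((Pb Fq (n + 1) c) * (Pb Fq e w)).coeff (n + 1) = 0),
      (mkJ (Pb Fq n (φ c)) : ModRing Fq (n+1)) = mkJ (Pb Fq (n + 1) c * Pb Fq e w) := by
    intro c hc
    rw [Finset.mem_filter] at hc
    apply mk_eq_mk_of_coeff
    intro k hk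
    match k with
    | 0 => rw [Pb_coeff_zero, mul_coeff_zero, Pb_coeff_zero, Pb_coeff_zero, one_mul]
    | (j + 1) =>
      by_cases hj : j < n
      · rw [Pb_coeff_succ, dif_pos hj]
      · have hjn : j = n := by omega
        subst hjn
        rw [Pb_coeff_succ, dif_neg (by omega), hc.2]
  refine Finset.sum_bij' (fun c _ => φ c) (fun v _ => ψ v) ?_ ?_ ?_ ?_ ?_
  · intro c hc; exact Finset.mem_univ _
  · -- ψ v lands in the filter
    intro v _
    rw [Finset.mem_filter]
    refine ⟨Finset.mem_univ _, ?_⟩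
    have := coeff_eq_of_mk_eq (hB v) (k := n + 1) le_rfl
    rw [this, Pb_coeff_succ, dif_neg (lt_irrefl n)]
  · -- left inverse on filter
    intro c hc
    have h1 : (mkJ (Pb Fq n (φ c) * g) : ModRing Fq (n+1)) = mkJ (Pb Fq (n + 1) c) := by
      rw [map_mul, hA c hc, ← map_mul]
      have : Pb Fq (n + 1) c * Pb Fq e w * g = Pb Fq (n + 1) c * (Pb Fq e w * g) := by ring
      rw [this, habs]
    show ψ (φ c) = c
    funext i
    have h2 := coeff_eq_of_mk_eq h1 (k := (i : ℕ) + 1) (by omega)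
    have h3 : ψ (φ c) i = (Pb Fq n (φ c) * g).coeff ((i : ℕ) + 1) := rfl
    rw [h3, h2, Pb_coeff_succ, dif_pos i.isLt]
  · -- right inverse
    intro v _
    show φ (ψ v) = v
    funext j
    have h2 := coeff_eq_of_mk_eq (hB v) (k := (j : ℕ) + 1) (by omega)
    have h3 : φ (ψ v) j = (Pb Fq (n + 1) (ψ v) * Pb Fq e w).coeff ((j : ℕ) + 1) := rfl
    rw [h3, h2, Pb_coeff_succ, dif_pos j.isLt]
  · -- values
    intro c hc
    rw [← F_mul χ (isUnit_mk_Pb _ c) (isUnit_mk_Pb _ w)]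
    have : F χ (Pb Fq (n + 1) c * Pb Fq e w) = F χ (Pb Fq n (φ c)) := by
      rw [F, F, hA c hc]
    rw [this]

lemma count_fiber [Fintype Fq] {e : ℕ} (a : Fin e → Fq) (t0 : Fq) (j0 : Fin e)
    (ha : a j0 ≠ 0) :
    (Finset.univ.filter (fun w : Fin e → Fq => t0 + ∑ j, a j * w j = 0)).card
      = Fintype.card Fq ^ (e - 1) := by
  have key : ∀ (w : Fin e → Fq) (x : Fq),
      t0 + ∑ j, a j * Function.update w j0 x j
        = a j0 * x + ((∑ j ∈ Finset.univ \ {j0}, a j * w j) + t0) := by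
    intro w x
    have h1 : (fun j => a j * Function.update w j0 x j) =
        Function.update (fun j => a j * w j) j0 (a j0 * x) := by
      funext j
      by_cases h : j = j0
      · subst h; simp
      · simp [Function.update_of_ne h]
    rw [h1, Finset.sum_update_of_mem (Finset.mem_univ j0)]
    ring
  have split : ∀ w : Fin e → Fq,
      (∑ j, a j * w j) = a j0 * w j0 + ∑ j ∈ Finset.univ \ {j0}, a j * w j := by
    intro w
    rw [Finset.sum_eq_sum_sdiff_singleton_add (Finset.mem_univ j0)]
    ring
  have offsum_update : ∀ (w : Fin e → Fq) (x : Fq),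
      (∑ j ∈ Finset.univ \ {j0}, a j * Function.update w j0 x j)
        = ∑ j ∈ Finset.univ \ {j0}, a j * w j := by
    intro w x
    refine Finset.sum_congr rfl fun j hj => ?_
    rw [Finset.mem_sdiff, Finset.mem_singleton] at hj
    rw [Function.update_of_ne hj.2]
  have card1 : (Finset.univ.filter (fun w : Fin e → Fq => t0 + ∑ j, a j * w j = 0)).card
      = (Finset.univ.filter (fun w : Fin e → Fq => w j0 = 0)).card := by
    refine Finset.card_bij' (fun w _ => Function.update w j0 0)
      (fun w _ => Function.update w j0 (-(a j0)⁻¹ * (t0 + ∑ j ∈ Finset.univ \ {j0}, a j * w j)))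
      ?_ ?_ ?_ ?_
    · intro w hw
      rw [Finset.mem_filter]
      exact ⟨Finset.mem_univ _, Function.update_self _ _ _⟩
    · intro w hw
      rw [Finset.mem_filter] at hw ⊢
      refine ⟨Finset.mem_univ _, ?_⟩
      rw [key]
      have h5 : a j0 * (-(a j0)⁻¹ * (t0 + ∑ j ∈ Finset.univ \ {j0}, a j * w j))
          = -(t0 + ∑ j ∈ Finset.univ \ {j0}, a j * w j) := by
        field_simp
      rw [h5]
      ring
    · -- left inverse
      intro w hw
      rw [Finset.mem_filter] at hw
      have hL : t0 + ∑ j, a j * w j = 0 := hw.2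
      rw [split w] at hL
      funext i
      by_cases h : i = j0
      · subst h
        rw [offsum_update]
        rw [Function.update_self]
        have : -(a i)⁻¹ * (t0 + ∑ j ∈ Finset.univ \ {i}, a j * w j) = w i := by
          have h5 : t0 + ∑ j ∈ Finset.univ \ {i}, a j * w j = -(a i * w i) := by
            linear_combination hL
          rw [h5]
          field_simp
        rw [this]
      · rw [Function.update_of_ne h, Function.update_of_ne h]
    · -- right inverse
      intro w hw
      rw [Finset.mem_filter] at hw
      funext i
      by_cases h : i = j0
      · subst h
        rw [Function.update_idem, Function.update_self, hw.2]
      · rw [Function.update_of_ne h, Function.update_of_ne h]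
  rw [card1]
  -- now count functions vanishing at j0
  have card2 : (Finset.univ.filter (fun w : Fin e → Fq => w j0 = 0)).card
      = Fintype.card ({j : Fin e // j ≠ j0} → Fq) := by
    rw [← Finset.card_univ]
    refine Finset.card_bij' (fun w _ => fun j : {j : Fin e // j ≠ j0} => w j)
      (fun v _ => fun j => if h : j = j0 then 0 else v ⟨j, h⟩) ?_ ?_ ?_ ?_
    · intro w hw; exact Finset.mem_univ _
    · intro v _
      rw [Finset.mem_filter]
      exact ⟨Finset.mem_univ _, by dsimp only; rw [dif_pos rfl]⟩
    · intro w hw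
      rw [Finset.mem_filter] at hw
      dsimp only
      funext i
      by_cases h : i = j0
      · subst h; rw [dif_pos rfl, hw.2]
      · rw [dif_neg h]
    · intro v _
      dsimp only
      funext j
      rw [dif_neg j.2]
  rw [card2, Fintype.card_fun]
  congr 1
  have : Fintype.card {j : Fin e // j ≠ j0} = e - 1 := by
    have h1 : Fintype.card {j : Fin e // j = j0} = 1 := Fintype.card_subtype_eq j0
    have h2 := Fintype.card_subtype_compl (fun j : Fin e => j = j0)
    rw [h1, Fintype.card_fin] at h2
    exact h2
  rw [this]

lemma coeff_top_expand (e : ℕ) (he : e ≤ n) (c : Fin (n + 1) → Fq) (w : Fin e → Fq) :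
    ((Pb Fq (n + 1) c) * (Pb Fq e w)).coeff (n + 1) =
      c (Fin.last n) + ∑ j : Fin e, (Pb Fq (n + 1) c).coeff (n - (j : ℕ)) * w j := by
  conv_lhs => rw [show (Pb Fq e w) = 1 + ∑ j : Fin e, C (w j) * X ^ ((j : ℕ) + 1) from rfl]
  rw [mul_add, Finset.mul_sum, mul_one, coeff_add, finset_sum_coeff]
  congr 1
  · rw [Pb_coeff_succ, dif_pos (by omega : n < n + 1)]
    congr 1
  · refine Finset.sum_congr rfl fun j _ => ?_
    have h1 : Pb Fq (n + 1) c * (C (w j) * X ^ ((j : ℕ) + 1)) =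
        C (w j) * (Pb Fq (n + 1) c * X ^ ((j : ℕ) + 1)) := by ring
    rw [h1, coeff_C_mul, coeff_mul_X_pow']
    rw [if_pos (by omega : (j : ℕ) + 1 ≤ n + 1)]
    have : n + 1 - ((j : ℕ) + 1) = n - (j : ℕ) := by omega
    rw [this]
    ring

lemma F_mul_conj_Pb [Fintype Fq] (k : ℕ) (b : Fin k → Fq) :
    F χ (Pb Fq k b) * F (conjChar χ) (Pb Fq k b) = 1 := by
  have h : Pb Fq k b = 1 + (Pb Fq k b - 1) := by ring
  rw [F, F, h]
  exact charVal_mul_conj χ (X_dvd_Pb_sub_one k b)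

lemma F_add_top (k : ℕ) (b : Fin k → Fq) (a : Fq) :
    F χ (Pb Fq k b + C a * X ^ (n + 1)) =
      F χ (Pb Fq k b) * F χ (1 + C a * X ^ (n + 1)) := by
  rw [← F_mul χ (isUnit_mk_Pb k b)
    (isUnit_mk_one_add (Dvd.dvd.mul_left (dvd_pow_self X (Nat.succ_ne_zero _)) _))]
  apply F_congr
  show (X : Fq[X]) ^ (n + 1 + 1) ∣
    Pb Fq k b + C a * X ^ (n + 1) - Pb Fq k b * (1 + C a * X ^ (n + 1))
  obtain ⟨w, hw⟩ := X_dvd_Pb_sub_one k b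
  have : Pb Fq k b + C a * X ^ (n + 1) - Pb Fq k b * (1 + C a * X ^ (n + 1)) =
      -((Pb Fq k b - 1) * C a * X ^ (n + 1)) := by ring
  rw [this, dvd_neg, hw]
  exact ⟨w * C a, by ring⟩

lemma S_zero [Fintype Fq] (χ' : (ModRing Fq (n + 1))ˣ →* ℂˣ) : S χ' 0 = 1 := by
  rw [S, Fintype.sum_unique]
  have h : Pb Fq 0 (default : Fin 0 → Fq) = 1 := by simp [Pb]
  rw [h, F_one]

lemma key_identity [Fintype Fq] (hχ2 : ∃ a : Fq, F χ (1 + C a * X ^ (n + 1)) ≠ 1)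
    (d e : ℕ) (hde : d + e = n) :
    S χ n * S (conjChar χ) e = (Fintype.card Fq : ℂ) ^ e * S χ d := by
  rcases e with _ | e'
  · have hd : d = n := by omega
    subst hd
    rw [S_zero, pow_zero, mul_one, one_mul]
  · have hen : e' + 1 ≤ n := by omega
    have hdn : d < n := by omega
    set q : ℂ := (Fintype.card Fq : ℂ) with hq
    -- Step 1: unfold into double sum over constrained c
    have step1 : S χ n * S (conjChar χ) (e' + 1) =
        ∑ w : Fin (e' + 1) → Fq, ∑ c ∈ Finset.univ.filter
          (fun c : Fin (n + 1) → Fq =>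
            ((Pb Fq (n + 1) c) * (Pb Fq (e' + 1) w)).coeff (n + 1) = 0),
          F χ (Pb Fq (n + 1) c) := by
      conv_lhs => rw [show S (conjChar χ) (e' + 1) =
        ∑ w : Fin (e' + 1) → Fq, F (conjChar χ) (Pb Fq (e' + 1) w) from rfl]
      rw [Finset.mul_sum]
      refine Finset.sum_congr rfl fun w _ => ?_
      rw [← inner_bij χ (e' + 1) w, Finset.sum_mul]
      refine Finset.sum_congr rfl fun c hc => ?_
      rw [mul_assoc, F_mul_conj_Pb, mul_one]
    -- Step 2: swap sums
    have step2 : (∑ w : Fin (e' + 1) → Fq, ∑ c ∈ Finset.univ.filter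
          (fun c : Fin (n + 1) → Fq =>
            ((Pb Fq (n + 1) c) * (Pb Fq (e' + 1) w)).coeff (n + 1) = 0),
          F χ (Pb Fq (n + 1) c)) =
        ∑ c : Fin (n + 1) → Fq,
          (((Finset.univ.filter (fun w : Fin (e' + 1) → Fq =>
            ((Pb Fq (n + 1) c) * (Pb Fq (e' + 1) w)).coeff (n + 1) = 0)).card : ℂ)) *
            F χ (Pb Fq (n + 1) c) := by
      have h1 : ∀ w : Fin (e' + 1) → Fq, (∑ c ∈ Finset.univ.filter
          (fun c : Fin (n + 1) → Fq =>
            ((Pb Fq (n + 1) c) * (Pb Fq (e' + 1) w)).coeff (n + 1) = 0),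
          F χ (Pb Fq (n + 1) c)) = ∑ c : Fin (n + 1) → Fq,
            if ((Pb Fq (n + 1) c) * (Pb Fq (e' + 1) w)).coeff (n + 1) = 0
            then F χ (Pb Fq (n + 1) c) else 0 := fun w => Finset.sum_filter _ _
      simp only [h1]
      rw [Finset.sum_comm]
      refine Finset.sum_congr rfl fun c _ => ?_
      rw [← Finset.sum_filter, Finset.sum_const, nsmul_eq_mul]
    -- Step 3: value of the inner cardinality
    have card_eval : ∀ c : Fin (n + 1) → Fq,
        (((Finset.univ.filter (fun w : Fin (e' + 1) → Fq =>
            ((Pb Fq (n + 1) c) * (Pb Fq (e' + 1) w)).coeff (n + 1) = 0)).card : ℂ)) =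
          q ^ e' + (if (∀ j : Fin (e' + 1), (Pb Fq (n + 1) c).coeff (n - (j : ℕ)) = 0)
            then (if c (Fin.last n) = 0 then q ^ (e' + 1) else 0) - q ^ e' else 0) := by
      intro c
      by_cases hA : ∀ j : Fin (e' + 1), (Pb Fq (n + 1) c).coeff (n - (j : ℕ)) = 0
      · rw [if_pos hA]
        have hfil : Finset.univ.filter (fun w : Fin (e' + 1) → Fq =>
              ((Pb Fq (n + 1) c) * (Pb Fq (e' + 1) w)).coeff (n + 1) = 0) =
            Finset.univ.filter (fun w : Fin (e' + 1) → Fq => c (Fin.last n) = 0) := by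
          apply Finset.filter_congr
          intro w _
          rw [coeff_top_expand (e' + 1) hen c w]
          have hsum : (∑ j : Fin (e' + 1), (Pb Fq (n + 1) c).coeff (n - (j : ℕ)) * w j) = 0 :=
            Finset.sum_eq_zero fun j _ => by rw [hA j, zero_mul]
          rw [hsum, add_zero]
        rw [hfil]
        by_cases h0 : c (Fin.last n) = 0
        · rw [if_pos h0]
          rw [Finset.filter_true_of_mem (fun _ _ => h0), Finset.card_univ,
            Fintype.card_fun, Fintype.card_fin]
          push_cast [hq]
          ring
        · rw [if_neg h0]
          rw [Finset.filter_false_of_mem (fun _ _ => h0), Finset.card_empty]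
          push_cast
          ring
      · rw [if_neg hA, add_zero]
        push_neg at hA
        obtain ⟨j0, hj0⟩ := hA
        have hfil : Finset.univ.filter (fun w : Fin (e' + 1) → Fq =>
              ((Pb Fq (n + 1) c) * (Pb Fq (e' + 1) w)).coeff (n + 1) = 0) =
            Finset.univ.filter (fun w : Fin (e' + 1) → Fq =>
              c (Fin.last n) + ∑ j : Fin (e' + 1),
                (Pb Fq (n + 1) c).coeff (n - (j : ℕ)) * w j = 0) := by
          apply Finset.filter_congr
          intro w _
          rw [coeff_top_expand (e' + 1) hen c w]
        rw [hfil, count_fiber (fun j : Fin (e' + 1) => (Pb Fq (n + 1) c).coeff (n - (j : ℕ)))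
          (c (Fin.last n)) j0 hj0]
        push_cast [hq]
        norm_num
    -- Step 4-6
    rw [step1, step2]
    set FA : Finset (Fin (n + 1) → Fq) := Finset.univ.filter
      (fun c : Fin (n + 1) → Fq =>
        ∀ j : Fin (e' + 1), (Pb Fq (n + 1) c).coeff (n - (j : ℕ)) = 0) with hFA
    have hdvanish : ∀ c ∈ FA, ∀ i : Fin (n + 1), d ≤ (i : ℕ) → (i : ℕ) < n → c i = 0 := by
      intro c hc i hdi hin
      rw [hFA, Finset.mem_filter] at hc
      have hj : (n - 1 - (i : ℕ)) < e' + 1 := by omega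
      have h2 := hc.2 ⟨n - 1 - (i : ℕ), hj⟩
      have harg : n - ((⟨n - 1 - (i : ℕ), hj⟩ : Fin (e' + 1)) : ℕ) = (i : ℕ) + 1 := by
        show n - (n - 1 - (i : ℕ)) = (i : ℕ) + 1
        omega
      rw [harg, Pb_coeff_succ, dif_pos i.isLt] at h2
      simpa using h2
    have hpoly : ∀ c ∈ FA, Pb Fq (n + 1) c =
        Pb Fq d (fun j : Fin d => c ⟨(j : ℕ), by omega⟩) + C (c (Fin.last n)) * X ^ (n + 1) := by
      intro c hc
      ext k
      rw [coeff_add, coeff_C_mul, coeff_X_pow]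
      match k with
      | 0 =>
        rw [Pb_coeff_zero, Pb_coeff_zero, if_neg (by omega : ¬ (0:ℕ) = n + 1), mul_zero, add_zero]
      | (k + 1) =>
        rw [Pb_coeff_succ, Pb_coeff_succ]
        by_cases h1 : k < d
        · rw [dif_pos (by omega : k < n + 1), dif_pos h1,
            if_neg (by omega : ¬ k + 1 = n + 1), mul_zero, add_zero]
        · rw [dif_neg h1]
          by_cases h2 : k = n
          · rw [dif_pos (by omega : k < n + 1), if_pos (by omega : k + 1 = n + 1),
              mul_one, zero_add]
            congr 1
            exact Fin.ext (by simpa using h2)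
          · by_cases h3 : k < n + 1
            · rw [dif_pos h3, if_neg (by omega : ¬ k + 1 = n + 1), mul_zero, add_zero]
              exact hdvanish c hc ⟨k, h3⟩ (by simp; omega) (by simp; omega)
            · rw [dif_neg h3, if_neg (by omega : ¬ k + 1 = n + 1), mul_zero, add_zero]
    calc (∑ c : Fin (n + 1) → Fq,
          (((Finset.univ.filter (fun w : Fin (e' + 1) → Fq =>
            ((Pb Fq (n + 1) c) * (Pb Fq (e' + 1) w)).coeff (n + 1) = 0)).card : ℂ)) *
            F χ (Pb Fq (n + 1) c))
        = ∑ c : Fin (n + 1) → Fq, (q ^ e' * F χ (Pb Fq (n + 1) c) +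
            (if (∀ j : Fin (e' + 1), (Pb Fq (n + 1) c).coeff (n - (j : ℕ)) = 0)
              then ((if c (Fin.last n) = 0 then q ^ (e' + 1) else 0) - q ^ e') *
                F χ (Pb Fq (n + 1) c) else 0)) := by
          refine Finset.sum_congr rfl fun c _ => ?_
          rw [card_eval c, add_mul, ite_mul, zero_mul]
      _ = q ^ e' * S χ (n + 1) + ∑ c ∈ FA,
            ((if c (Fin.last n) = 0 then q ^ (e' + 1) else 0) - q ^ e') *
              F χ (Pb Fq (n + 1) c) := by
          rw [Finset.sum_add_distrib, ← Finset.mul_sum, ← Finset.sum_filter]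
          rfl
      _ = ∑ c ∈ FA, ((if c (Fin.last n) = 0 then q ^ (e' + 1) else 0) - q ^ e') *
              F χ (Pb Fq (n + 1) c) := by
          rw [S_full_zero χ hχ2, mul_zero, zero_add]
      _ = ∑ p : (Fin d → Fq) × Fq, ((if p.2 = 0 then q ^ (e' + 1) else 0) - q ^ e') *
            (F χ (Pb Fq d p.1) * F χ (1 + C p.2 * X ^ (n + 1))) := by
          refine Finset.sum_nbij'
            (fun c => ((fun j : Fin d => c ⟨(j : ℕ), by omega⟩ : Fin d → Fq), c (Fin.last n)))
            (fun p => fun i : Fin (n + 1) =>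
              if h : (i : ℕ) < d then p.1 ⟨(i : ℕ), h⟩ else if (i : ℕ) = n then p.2 else 0)
            ?_ ?_ ?_ ?_ ?_
          · intro c hc; exact Finset.mem_univ _
          · intro p _
            rw [hFA, Finset.mem_filter]
            refine ⟨Finset.mem_univ _, fun j => ?_⟩
            have h1 : n - (j : ℕ) = (n - (j : ℕ) - 1) + 1 := by omega
            rw [h1, Pb_coeff_succ, dif_pos (by omega : n - (j : ℕ) - 1 < n + 1)]
            dsimp only
            rw [dif_neg (by omega : ¬ n - (j : ℕ) - 1 < d), if_neg (by omega)]
          · -- left inverse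
            intro c hc
            dsimp only
            funext i
            by_cases h1 : (i : ℕ) < d
            · rw [dif_pos h1]
            · rw [dif_neg h1]
              by_cases h2 : (i : ℕ) = n
              · rw [if_pos h2]
                congr 1
                exact (Fin.ext h2.symm : Fin.last n = i)
              · rw [if_neg h2]
                exact (hdvanish c hc i (by omega) (by omega)).symm
          · -- right inverse
            intro p _
            dsimp only
            refine Prod.ext ?_ ?_
            · funext j
              dsimp only
              rw [dif_pos j.isLt]
            · dsimp only
              rw [dif_neg (by simp [Fin.val_last]; omega), if_pos (by simp [Fin.val_last])]
          · -- values
            intro c hc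
            dsimp only
            rw [hpoly c hc, F_add_top]
      _ = q ^ (e' + 1) * S χ d := by
          rw [Fintype.sum_prod_type]
          have inner : ∀ b : Fin d → Fq,
              (∑ a : Fq, ((if a = 0 then q ^ (e' + 1) else 0) - q ^ e') *
                (F χ (Pb Fq d b) * F χ (1 + C a * X ^ (n + 1))))
              = q ^ (e' + 1) * F χ (Pb Fq d b) := by
            intro b
            have h2 : ∀ a : Fq, ((if a = 0 then q ^ (e' + 1) else 0) - q ^ e') *
                (F χ (Pb Fq d b) * F χ (1 + C a * X ^ (n + 1)))
                = (if a = 0 then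
                    q ^ (e' + 1) * (F χ (Pb Fq d b) * F χ (1 + C a * X ^ (n + 1))) else 0)
                  - (q ^ e' * F χ (Pb Fq d b)) * F χ (1 + C a * X ^ (n + 1)) := by
              intro a
              by_cases h : a = 0
              · simp only [if_pos h]; ring
              · simp only [if_neg h]; ring
            simp only [h2]
            rw [Finset.sum_sub_distrib, Finset.sum_ite_eq' Finset.univ (0 : Fq), ← Finset.mul_sum,
              sum_U_eq_zero χ hχ2, mul_zero, sub_zero, if_pos (Finset.mem_univ _)]
            have h3 : (1 : Fq[X]) + C (0 : Fq) * X ^ (n + 1) = 1 := by simp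
            rw [h3, F_one, mul_one]
          rw [Finset.sum_congr rfl (fun b _ => inner b), ← Finset.mul_sum]
          rfl

end FE

namespace FE
variable {Fq : Type} [Field Fq] {m : ℕ}

/-- Monic polynomial of degree `d` with lower coefficients `b`. -/
noncomputable def Gm (Fq : Type) [Field Fq] (d : ℕ) (b : Fin d → Fq) : Fq[X] :=
  X ^ d + ∑ j : Fin d, C (b j) * X ^ (j : ℕ)

lemma Gm_coeff (d : ℕ) (b : Fin d → Fq) (k : ℕ) :
    (Gm Fq d b).coeff k = if k = d then 1 else if h : k < d then b ⟨k, h⟩ else 0 := by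
  have hsum : (∑ j : Fin d, C (b j) * X ^ (j : ℕ)).coeff k =
      ∑ j : Fin d, (if k = (j : ℕ) then b j else 0) := by
    rw [finset_sum_coeff]
    refine Finset.sum_congr rfl fun j _ => ?_
    rw [coeff_C_mul, coeff_X_pow, mul_ite, mul_one, mul_zero]
  rw [Gm, coeff_add, coeff_X_pow, hsum]
  by_cases hk : k = d
  · subst hk
    rw [if_pos rfl, if_pos rfl, Finset.sum_eq_zero, add_zero]
    intro j _
    rw [if_neg (by omega)]
  · rw [if_neg hk, if_neg hk, zero_add]
    by_cases h : k < d
    · rw [dif_pos h, Finset.sum_eq_single (⟨k, h⟩ : Fin d)]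
      · simp
      · intro j _ hj
        rw [if_neg fun hkj => hj (Fin.ext hkj.symm)]
      · simp
    · rw [dif_neg h]
      apply Finset.sum_eq_zero
      intro j _
      rw [if_neg (by omega)]

lemma Gm_natDegree (d : ℕ) (b : Fin d → Fq) : (Gm Fq d b).natDegree = d := by
  have hle : (Gm Fq d b).natDegree ≤ d := by
    rw [natDegree_le_iff_coeff_eq_zero]
    intro N hN
    rw [Gm_coeff, if_neg (by omega), dif_neg (by omega)]
  have hge : d ≤ (Gm Fq d b).natDegree := by
    apply le_natDegree_of_ne_zero
    rw [Gm_coeff, if_pos rfl]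
    exact one_ne_zero
  omega

lemma Gm_monic (d : ℕ) (b : Fin d → Fq) : (Gm Fq d b).Monic := by
  have : (Gm Fq d b).coeff (Gm Fq d b).natDegree = 1 := by
    rw [Gm_natDegree, Gm_coeff, if_pos rfl]
  exact this

lemma Gm_injective (d : ℕ) : Function.Injective (Gm Fq d) := by
  intro b b' h
  funext j
  have := congrArg (fun p : Fq[X] => p.coeff (j : ℕ)) h
  simpa [Gm_coeff, if_neg (by omega : ¬ (j:ℕ) = d), j.isLt] using this

lemma monic_set_eq (d : ℕ) :
    {f : Fq[X] | f.Monic ∧ f.natDegree = d} = Set.range (Gm Fq d) := by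
  ext f
  constructor
  · rintro ⟨hm, hd⟩
    refine ⟨fun j : Fin d => f.coeff (j : ℕ), ?_⟩
    ext k
    rw [Gm_coeff]
    by_cases hk : k = d
    · subst hk
      rw [if_pos rfl, ← hd]
      exact (hm.coeff_natDegree).symm
    · rw [if_neg hk]
      by_cases h : k < d
      · rw [dif_pos h]
      · rw [dif_neg h]
        exact (coeff_eq_zero_of_natDegree_lt (by omega)).symm
  · rintro ⟨b, rfl⟩
    exact ⟨Gm_monic d b, Gm_natDegree d b⟩

lemma Gm_reverse (d : ℕ) (b : Fin d → Fq) :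
    (Gm Fq d b).reverse = Pb Fq d (fun j : Fin d => b j.rev) := by
  ext k
  rw [coeff_reverse, Gm_natDegree]
  by_cases hk : k ≤ d
  · rw [revAt_le hk]
    rw [Gm_coeff]
    match k with
    | 0 =>
      rw [Pb_coeff_zero, if_pos (by omega), ]
    | (k + 1) =>
      rw [Pb_coeff_succ, if_neg (by omega), dif_pos (by omega : d - (k+1) < d)]
      rw [dif_pos (by omega : k < d)]
      congr 1
  · rw [revAt_eq_self_of_lt (by omega), Gm_coeff, if_neg (by omega), dif_neg (by omega)]
    have hk1 : k = (k - 1) + 1 := by omega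
    rw [hk1, Pb_coeff_succ, dif_neg (by omega)]

lemma psiCoeff_eq_S {n : ℕ} [Fintype Fq] (χ : (ModRing Fq (n + 1))ˣ →* ℂˣ) (d : ℕ) :
    psiCoeff (n + 1) χ d = S χ d := by
  rw [psiCoeff, monic_set_eq, finsum_mem_range (Gm_injective d), finsum_eq_sum_of_fintype]
  have h1 : ∀ b : Fin d → Fq, psiChar (n + 1) χ (Gm Fq d b) =
      F χ (Pb Fq d (fun j : Fin d => b j.rev)) := by
    intro b
    rw [psiChar, Gm_reverse]
    rfl
  simp only [h1]
  rw [S]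
  exact Equiv.sum_comp (Equiv.arrowCongr Fin.revPerm (Equiv.refl Fq)) (fun b => F χ (Pb Fq d b))

end FE


theorem stmt_10 (Fq : Type) [Field Fq] [Fintype Fq] (m : ℕ) (hm : 1 ≤ m)
    (χ : (ModRing Fq m)ˣ →* ℂˣ) (hχ : IsPrimitiveEven Fq m χ) (s : ℂ) :
    Lpsi m χ s =
      epsPsi m χ * (Fintype.card Fq : ℂ) ^ (((m : ℂ) - 1) * (1 / 2 - s)) *
        Lpsi m (conjChar χ) (1 - s) := by
  obtain ⟨n, rfl⟩ : ∃ n, m = n + 1 := ⟨m - 1, by omega⟩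
  set q : ℂ := (Fintype.card Fq : ℂ) with hq
  have hq0 : q ≠ 0 := by
    rw [hq]
    exact_mod_cast Fintype.card_ne_zero
  have hχ2 : ∃ a : Fq, FE.F χ (1 + C a * X ^ (n + 1)) ≠ 1 := hχ.2
  have hχ2' : ∃ a : Fq, FE.F (conjChar χ) (1 + C a * X ^ (n + 1)) ≠ 1 := by
    obtain ⟨a, ha⟩ := hχ2
    refine ⟨a, fun h => ha ?_⟩
    have h2 : FE.F (conjChar χ) (1 + C a * X ^ (n + 1)) =
        (starRingEnd ℂ) (FE.F χ (1 + C a * X ^ (n + 1))) := FE.charVal_conjChar χ _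
    rw [h2] at h
    have := congrArg (starRingEnd ℂ) h
    simpa using this
  have key : ∀ e, e ≤ n → FE.S χ n * FE.S (conjChar χ) e
      = q ^ e * FE.S χ (n - e) :=
    fun e he => FE.key_identity χ hχ2 (n - e) e (by omega)
  have hLc : ∀ (χ' : (ModRing Fq (n + 1))ˣ →* ℂˣ) (t : ℂ), Lpsi (n + 1) χ' t =
      ∑ d ∈ Finset.range (n + 1), FE.S χ' d * q ^ (-(d : ℂ) * t) := by
    intro χ' t
    rw [Lpsi]
    exact Finset.sum_congr rfl fun d _ => by rw [FE.psiCoeff_eq_S]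
  rw [hLc, hLc, epsPsi, FE.psiCoeff_eq_S]
  have hn1 : n + 1 - 1 = n := rfl
  rw [hn1]
  have hcast : (((n + 1 : ℕ) : ℂ) - 1) = (n : ℂ) := by push_cast; ring
  rw [hcast]
  rw [Finset.mul_sum]
  rw [← Finset.sum_range_reflect (fun d => FE.S χ d * q ^ (-(d : ℂ) * s)) (n + 1)]
  refine Finset.sum_congr rfl fun e he => ?_
  rw [Finset.mem_range] at he
  have he' : e ≤ n := by omega
  have hidx : n + 1 - 1 - e = n - e := by omega
  rw [hidx]
  have hsub : ((n - e : ℕ) : ℂ) = (n : ℂ) - (e : ℂ) := by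
    rw [Nat.cast_sub he']
  calc FE.S χ (n - e) * q ^ (-((n - e : ℕ) : ℂ) * s)
      = FE.S χ (n - e) * (q ^ (e : ℕ) *
          q ^ (-((n : ℂ) / 2) + (n : ℂ) * (1 / 2 - s) + -(e : ℂ) * (1 - s))) := by
        rw [← Complex.cpow_natCast q e, ← Complex.cpow_add _ _ hq0]
        congr 1
        rw [hsub]
        ring
    _ = (q ^ (e : ℕ) * FE.S χ (n - e)) *
          (q ^ (-((n : ℂ) / 2)) * q ^ ((n : ℂ) * (1 / 2 - s)) * q ^ (-(e : ℂ) * (1 - s))) := by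
        rw [Complex.cpow_add _ _ hq0, Complex.cpow_add _ _ hq0]
        ring
    _ = (FE.S χ n * FE.S (conjChar χ) e) *
          (q ^ (-((n : ℂ) / 2)) * q ^ ((n : ℂ) * (1 / 2 - s)) * q ^ (-(e : ℂ) * (1 - s))) := by
        rw [key e he']
    _ = q ^ (-((n : ℂ) / 2)) * FE.S χ n * q ^ ((n : ℂ) * (1 / 2 - s)) *
          (FE.S (conjChar χ) e * q ^ (-(e : ℂ) * (1 - s))) := by
        ring
end

section
/- Let 𝔽_q be a finite field with q elements and let m ≥ 1 be an integer. The number of group homomorphisms χ : (𝔽_q[u]/(u^{m+1}))ˣ → ℂˣ that are trivial on the residues of the nonzero constants 𝔽_qˣ and nontrivial on the subgroup of residues of elements 1 + a·u^m with a ∈ 𝔽_q equals q^m − q^{m−1}. -/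
open Polynomial

section Aux
variable (Fq : Type) [Field Fq] (m : ℕ)

noncomputable def piHom : ModRing Fq m →ₐ[Fq] Fq :=
  Ideal.Quotient.liftₐ _ (aeval (0 : Fq)) (by
    intro f hf
    rw [Ideal.mem_span_singleton] at hf
    obtain ⟨g, rfl⟩ := hf
    simp)

@[simp] lemma piHom_mk (f : Fq[X]) :
    piHom Fq m (Ideal.Quotient.mk (Ideal.span {(X : Fq[X]) ^ (m + 1)}) f) = f.eval 0 := by
  have := Ideal.Quotient.liftₐ_apply (Ideal.span {(X : Fq[X]) ^ (m + 1)}) (aeval (0 : Fq))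
  simp [piHom, Ideal.Quotient.liftₐ_apply]

lemma isUnit_iff_piHom (x : ModRing Fq m) : IsUnit x ↔ piHom Fq m x ≠ 0 := by
  constructor
  · intro h h0
    obtain ⟨u, rfl⟩ := h
    have : IsUnit (piHom Fq m u) := (u.isUnit).map (piHom Fq m)
    rw [h0] at this
    exact this.ne_zero rfl
  · intro h
    obtain ⟨f, rfl⟩ := Ideal.Quotient.mk_surjective x
    set c : Fq := f.eval 0 with hc
    have hc0 : c ≠ 0 := by simpa using h
    set y := Ideal.Quotient.mk (Ideal.span {(X : Fq[X]) ^ (m + 1)}) (f - C c) with hy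
    have hnil : IsNilpotent y := by
      refine ⟨m + 1, ?_⟩
      rw [hy, ← map_pow, Ideal.Quotient.eq_zero_iff_mem, Ideal.mem_span_singleton]
      exact pow_dvd_pow_of_dvd (by rw [X_dvd_iff]; simp [hc, coeff_zero_eq_eval_zero]) _
    have hx : Ideal.Quotient.mk (Ideal.span {(X : Fq[X]) ^ (m + 1)}) f
        = Ideal.Quotient.mk (Ideal.span {(X : Fq[X]) ^ (m + 1)}) (C c) + y := by
      rw [hy, map_sub]; ring
    rw [hx]
    exact hnil.isUnit_add_left_of_commute
      ((Polynomial.isUnit_C.mpr hc0.isUnit).map (Ideal.Quotient.mk _)) (Commute.all _ _)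
end Aux

section Cards
variable (Fq : Type) [Field Fq] [Fintype Fq] (m : ℕ)

noncomputable def mrPB : PowerBasis Fq (ModRing Fq m) :=
  AdjoinRoot.powerBasis' (monic_X_pow (m + 1))

lemma mrPB_dim : (mrPB Fq m).dim = m + 1 := by
  simp [mrPB, AdjoinRoot.powerBasis']

instance : Module.Finite Fq (ModRing Fq m) := (mrPB Fq m).finite

instance : Finite (ModRing Fq m) := Module.finite_of_finite Fq

lemma finrank_modRing : Module.finrank Fq (ModRing Fq m) = m + 1 := by
  rw [(mrPB Fq m).finrank, mrPB_dim]

lemma card_modRing : Nat.card (ModRing Fq m) = Fintype.card Fq ^ (m + 1) := by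
  have : Fintype (ModRing Fq m) := Fintype.ofFinite _
  rw [Nat.card_eq_fintype_card, Module.card_eq_pow_finrank (K := Fq), finrank_modRing]

lemma card_piHom_ker :
    Nat.card {x : ModRing Fq m // piHom Fq m x = 0} = Fintype.card Fq ^ m := by
  have hsurj : Function.Surjective (piHom Fq m) := fun c =>
    ⟨algebraMap Fq _ c, (piHom Fq m).commutes c⟩
  have hker : Module.finrank Fq (LinearMap.ker (piHom Fq m).toLinearMap) = m := by
    have h := LinearMap.finrank_range_add_finrank_ker (piHom Fq m).toLinearMap
    rw [show LinearMap.range (piHom Fq m).toLinearMap = ⊤ from LinearMap.range_eq_top.mpr hsurj,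
      finrank_top, Module.finrank_self, finrank_modRing] at h
    omega
  have e : {x : ModRing Fq m // piHom Fq m x = 0} ≃
      LinearMap.ker (piHom Fq m).toLinearMap :=
    Equiv.subtypeEquivRight (fun x => by simp [LinearMap.mem_ker])
  rw [Nat.card_congr e]
  have : Fintype (LinearMap.ker (piHom Fq m).toLinearMap) := Fintype.ofFinite _
  rw [Nat.card_eq_fintype_card, Module.card_eq_pow_finrank (K := Fq), hker]

lemma card_modRing_units :
    Nat.card (ModRing Fq m)ˣ = Fintype.card Fq ^ (m + 1) - Fintype.card Fq ^ m := by
  classical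
  have : Fintype (ModRing Fq m) := Fintype.ofFinite _
  have e1 : (ModRing Fq m)ˣ ≃ {x : ModRing Fq m // IsUnit x} :=
    (Submonoid.unitsTypeEquivIsUnitSubmonoid).toEquiv.trans
      (Equiv.subtypeEquivRight (fun x => IsUnit.mem_submonoid_iff x))
  have e2 : {x : ModRing Fq m // IsUnit x} ≃ {x : ModRing Fq m // ¬ piHom Fq m x = 0} :=
    Equiv.subtypeEquivRight (fun x => by simp [isUnit_iff_piHom])
  rw [Nat.card_congr (e1.trans e2)]
  rw [Nat.card_eq_fintype_card, Fintype.card_subtype_compl, ← Nat.card_eq_fintype_card,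
    ← Nat.card_eq_fintype_card (α := {x : ModRing Fq m // piHom Fq m x = 0}),
    card_modRing, card_piHom_ker]
end Cards

section Groups
variable (Fq : Type) [Field Fq] (m : ℕ)

/-- constants into the quotient ring, as ring hom -/
noncomputable def mkC : Fq →+* ModRing Fq m :=
  (Ideal.Quotient.mk (Ideal.span {(X : Fq[X]) ^ (m + 1)})).comp (C : Fq →+* Fq[X])

@[simp] lemma piHom_mkC (c : Fq) : piHom Fq m (mkC Fq m c) = c := by
  simp [mkC]

noncomputable def sHom : Fqˣ →* (ModRing Fq m)ˣ :=
  Units.map (mkC Fq m).toMonoidHom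

@[simp] lemma sHom_val (c : Fqˣ) :
    ((sHom Fq m c : (ModRing Fq m)ˣ) : ModRing Fq m)
      = Ideal.Quotient.mk (Ideal.span {(X : Fq[X]) ^ (m + 1)}) (C (c : Fq)) := rfl

noncomputable def pHom : (ModRing Fq m)ˣ →* Fqˣ :=
  Units.map (piHom Fq m : ModRing Fq m →+* Fq).toMonoidHom

@[simp] lemma pHom_sHom (c : Fqˣ) : pHom Fq m (sHom Fq m c) = c :=
  Units.ext (by simp [pHom, sHom])

lemma sHom_injective : Function.Injective (sHom Fq m) := by
  intro a b h
  have := congrArg (pHom Fq m) h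
  simpa using this

lemma theta_mul (hm : 1 ≤ m) (a b : Fq) :
    Ideal.Quotient.mk (Ideal.span {(X : Fq[X]) ^ (m + 1)}) (C a * X ^ m) *
      Ideal.Quotient.mk (Ideal.span {(X : Fq[X]) ^ (m + 1)}) (C b * X ^ m) = 0 := by
  rw [← map_mul, Ideal.Quotient.eq_zero_iff_mem, Ideal.mem_span_singleton]
  have : (X : Fq[X]) ^ (m + 1) ∣ X ^ m * X ^ m := by
    rw [← pow_add]; exact pow_dvd_pow X (by omega)
  calc (X : Fq[X]) ^ (m + 1) ∣ X ^ m * X ^ m := this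
    _ ∣ C a * X ^ m * (C b * X ^ m) := ⟨C a * C b, by ring⟩

noncomputable def bUnit (hm : 1 ≤ m) (a : Fq) : (ModRing Fq m)ˣ where
  val := Ideal.Quotient.mk (Ideal.span {(X : Fq[X]) ^ (m + 1)}) (1 + C a * X ^ m)
  inv := Ideal.Quotient.mk (Ideal.span {(X : Fq[X]) ^ (m + 1)}) (1 - C a * X ^ m)
  val_inv := by
    have := theta_mul Fq m hm a (-a)
    rw [← map_mul]
    rw [show (1 + C a * X ^ m) * (1 - C a * X ^ m)
        = 1 + (C a * X ^ m) * (C (-a) * X ^ m) by push_cast [map_neg]; ring]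
    rw [map_add, map_mul, this, map_one, add_zero]
  inv_val := by
    have := theta_mul Fq m hm a (-a)
    rw [← map_mul]
    rw [show (1 - C a * X ^ m) * (1 + C a * X ^ m)
        = 1 + (C a * X ^ m) * (C (-a) * X ^ m) by push_cast [map_neg]; ring]
    rw [map_add, map_mul, this, map_one, add_zero]

@[simp] lemma bUnit_val (hm : 1 ≤ m) (a : Fq) :
    ((bUnit Fq m hm a : (ModRing Fq m)ˣ) : ModRing Fq m)
      = Ideal.Quotient.mk (Ideal.span {(X : Fq[X]) ^ (m + 1)}) (1 + C a * X ^ m) := rfl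

noncomputable def bHom (hm : 1 ≤ m) : Multiplicative Fq →* (ModRing Fq m)ˣ where
  toFun a := bUnit Fq m hm (a.toAdd)
  map_one' := by
    apply Units.ext
    simp
  map_mul' a b := by
    apply Units.ext
    show Ideal.Quotient.mk (Ideal.span {(X : Fq[X]) ^ (m + 1)})
        (1 + C ((a * b).toAdd) * X ^ m)
      = Ideal.Quotient.mk (Ideal.span {(X : Fq[X]) ^ (m + 1)}) (1 + C (a.toAdd) * X ^ m) *
        Ideal.Quotient.mk (Ideal.span {(X : Fq[X]) ^ (m + 1)}) (1 + C (b.toAdd) * X ^ m)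
    rw [← map_mul, Ideal.Quotient.eq, toAdd_mul]
    rw [show (1 + C (a.toAdd + b.toAdd) * X ^ m)
        - ((1 + C (a.toAdd) * X ^ m) * (1 + C (b.toAdd) * X ^ m))
        = -(C (a.toAdd) * C (b.toAdd) * (X ^ m * X ^ m)) by rw [map_add]; ring]
    apply neg_mem
    rw [Ideal.mem_span_singleton]
    exact Dvd.dvd.mul_left (by rw [← pow_add]; exact pow_dvd_pow X (by omega)) _

lemma bHom_injective (hm : 1 ≤ m) : Function.Injective (bHom Fq m hm) := by
  rw [injective_iff_map_eq_one]
  intro a ha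
  have hval := congrArg (fun u : (ModRing Fq m)ˣ => (u : ModRing Fq m)) ha
  simp only [bHom, MonoidHom.coe_mk, OneHom.coe_mk, bUnit_val, Units.val_one] at hval
  have h0 : Ideal.Quotient.mk (Ideal.span {(X : Fq[X]) ^ (m + 1)}) (C (a.toAdd) * X ^ m) = 0 := by
    have h1 : Ideal.Quotient.mk (Ideal.span {(X : Fq[X]) ^ (m + 1)}) (1 + C (a.toAdd) * X ^ m)
        = Ideal.Quotient.mk (Ideal.span {(X : Fq[X]) ^ (m + 1)}) 1 := by
      rw [map_one]; exact hval
    rw [Ideal.Quotient.eq] at h1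
    rw [Ideal.Quotient.eq_zero_iff_mem]
    simpa using h1
  rw [Ideal.Quotient.eq_zero_iff_mem, Ideal.mem_span_singleton] at h0
  by_contra hne
  have hA : a.toAdd ≠ 0 := by
    intro h
    exact hne (by simpa using (congrArg Multiplicative.ofAdd h))
  have hne0 : (C (a.toAdd) * X ^ m : Fq[X]) ≠ 0 :=
    mul_ne_zero (C_ne_zero.mpr hA) (pow_ne_zero _ X_ne_zero)
  have hdeg := Polynomial.natDegree_le_of_dvd h0 hne0
  rw [natDegree_C_mul_X_pow m _ hA, natDegree_X_pow] at hdeg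
  omega

@[simp] lemma pHom_bHom (hm : 1 ≤ m) (a : Multiplicative Fq) : pHom Fq m (bHom Fq m hm a) = 1 := by
  apply Units.ext
  have : (m : ℕ) ≠ 0 := by omega
  simp [pHom, bHom, bUnit, this, zero_pow]

end Groups

section CharCount
variable {G : Type*} [CommGroup G] [Finite G]

lemma card_monoidHom_units : Nat.card (G →* ℂˣ) = Nat.card G := by
  obtain ⟨e⟩ := CommGroup.monoidHom_mulEquiv_of_hasEnoughRootsOfUnity G ℂ
  exact Nat.card_congr e.toEquiv

instance : Finite (G →* ℂˣ) := by
  obtain ⟨e⟩ := CommGroup.monoidHom_mulEquiv_of_hasEnoughRootsOfUnity G ℂ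
  exact Finite.of_equiv G e.symm.toEquiv

lemma card_trivialOn (H : Subgroup G) :
    Nat.card {χ : G →* ℂˣ // ∀ x ∈ H, χ x = 1} = H.index := by
  have e : {χ : G →* ℂˣ // ∀ x ∈ H, χ x = 1} ≃ (G ⧸ H →* ℂˣ) :=
    { toFun := fun χ => QuotientGroup.lift H χ.1 (fun x hx => χ.2 x hx)
      invFun := fun ψ => ⟨ψ.comp (QuotientGroup.mk' H), fun x hx => by
        simp only [MonoidHom.comp_apply]
        rw [show QuotientGroup.mk' H x = 1 from (QuotientGroup.eq_one_iff x).mpr hx, map_one]⟩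
      left_inv := fun χ => Subtype.ext (MonoidHom.ext fun x => rfl)
      right_inv := fun ψ => MonoidHom.ext fun x => by
        induction x using QuotientGroup.induction_on
        rfl }
  rw [Nat.card_congr e, card_monoidHom_units, Subgroup.index_eq_card]

lemma card_trivialOn' {M : Type*} [CommMonoid M] [Finite Mˣ] (H : Subgroup Mˣ) :
    Nat.card {χ : Mˣ →* ℂˣ // ∀ x ∈ H, χ x = 1} = H.index :=
  card_trivialOn H

end CharCount

lemma nat_card_diff {α : Type*} [Finite α] (P Q : α → Prop) :
    Nat.card {x : α // P x ∧ ¬ Q x}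
      = Nat.card {x : α // P x} - Nat.card {x : α // P x ∧ Q x} := by
  classical
  have h1 : {x : α | P x ∧ Q x} ⊆ {x : α | P x} := fun x hx => hx.1
  have h2 : {x : α | P x ∧ ¬ Q x} = {x : α | P x} \ {x : α | P x ∧ Q x} := by
    ext x
    simp only [Set.mem_setOf_eq, Set.mem_diff]
    tauto
  have := Set.ncard_diff h1 (Set.toFinite _)
  rw [← Nat.card_coe_set_eq, ← Nat.card_coe_set_eq, ← h2,
    ← Nat.card_coe_set_eq] at this
  exact this

lemma charVal_coe {R : Type*} [Monoid R] (χ : Rˣ →* ℂˣ) (w : Rˣ) :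
    charVal χ (w : R) = ((χ w : ℂˣ) : ℂ) := by
  rw [charVal, dif_pos w.isUnit]
  exact congrArg (fun u : ℂˣ => (u : ℂ)) (congrArg χ (IsUnit.unit_of_val_units _))


set_option maxHeartbeats 2000000 in
theorem stmt_12 (Fq : Type) [Field Fq] [Fintype Fq] (q : ℕ) (hq : q = Fintype.card Fq)
    (m : ℕ) (hm : 1 ≤ m) :
    Nat.card {χ : (ModRing Fq m)ˣ →* ℂˣ // IsPrimitiveEven Fq m χ} =
      q ^ m - q ^ (m - 1) := by
  classical
  have hq2 : 2 ≤ q := hq ▸ Fintype.one_lt_card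
  set H₁ := (sHom Fq m).range with hH₁
  set B := (bHom Fq m hm).range with hB
  -- translate the predicate
  have hiff : ∀ χ : (ModRing Fq m)ˣ →* ℂˣ, IsPrimitiveEven Fq m χ ↔
      ((∀ x ∈ H₁, χ x = 1) ∧ ¬ (∀ x ∈ B, χ x = 1)) := by
    intro χ
    constructor
    · rintro ⟨h1, h2⟩
      constructor
      · rintro x ⟨c, rfl⟩
        have := h1 (c : Fq) c.ne_zero
        rw [← sHom_val Fq m c, charVal_coe] at this
        exact Units.ext (by simpa using this)
      · intro hQ
        obtain ⟨a, ha⟩ := h2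
        apply ha
        have hx : Ideal.Quotient.mk (Ideal.span {(X : Fq[X]) ^ (m + 1)}) (1 + C a * X ^ m)
            = ((bHom Fq m hm (Multiplicative.ofAdd a) : (ModRing Fq m)ˣ) : ModRing Fq m) := rfl
        rw [hx, charVal_coe, hQ _ ⟨Multiplicative.ofAdd a, rfl⟩, Units.val_one]
    · rintro ⟨h1, h2⟩
      constructor
      · intro a ha
        have hx : Ideal.Quotient.mk (Ideal.span {(X : Fq[X]) ^ (m + 1)}) (C a)
            = ((sHom Fq m (Units.mk0 a ha) : (ModRing Fq m)ˣ) : ModRing Fq m) := rfl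
        rw [hx, charVal_coe, h1 _ ⟨Units.mk0 a ha, rfl⟩, Units.val_one]
      · push_neg at h2
        obtain ⟨x, ⟨a, rfl⟩, hx1⟩ := h2
        refine ⟨a.toAdd, ?_⟩
        have hx : Ideal.Quotient.mk (Ideal.span {(X : Fq[X]) ^ (m + 1)})
            (1 + C (a.toAdd) * X ^ m)
            = ((bHom Fq m hm a : (ModRing Fq m)ˣ) : ModRing Fq m) := rfl
        rw [hx, charVal_coe]
        intro h
        exact hx1 (Units.ext (by simpa using h))
  rw [Nat.card_congr (Equiv.subtypeEquivRight hiff)]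
  haveI hFin : Finite ((ModRing Fq m)ˣ →* ℂˣ) := by
    obtain ⟨e⟩ := CommGroup.monoidHom_mulEquiv_of_hasEnoughRootsOfUnity ((ModRing Fq m)ˣ) ℂ
    exact Finite.of_equiv _ e.symm.toEquiv
  have hdiff : Nat.card {χ : (ModRing Fq m)ˣ →* ℂˣ // (∀ x ∈ H₁, χ x = 1) ∧ ¬ (∀ x ∈ B, χ x = 1)}
      = Nat.card {χ : (ModRing Fq m)ˣ →* ℂˣ // ∀ x ∈ H₁, χ x = 1}
        - Nat.card {χ : (ModRing Fq m)ˣ →* ℂˣ // (∀ x ∈ H₁, χ x = 1) ∧ (∀ x ∈ B, χ x = 1)} :=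
    nat_card_diff _ _
  rw [hdiff]
  have e2 : {χ : (ModRing Fq m)ˣ →* ℂˣ // (∀ x ∈ H₁, χ x = 1) ∧ (∀ x ∈ B, χ x = 1)}
      ≃ {χ : (ModRing Fq m)ˣ →* ℂˣ // ∀ x ∈ H₁ ⊔ B, χ x = 1} := by
    refine Equiv.subtypeEquivRight fun χ => ?_
    constructor
    · rintro ⟨hA, hBx⟩ x hx
      have hsup : H₁ ⊔ B ≤ χ.ker := by
        refine sup_le (fun y hy => ?_) (fun y hy => ?_)
        · exact MonoidHom.mem_ker.mpr (hA y hy)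
        · exact MonoidHom.mem_ker.mpr (hBx y hy)
      exact MonoidHom.mem_ker.mp (hsup hx)
    · intro h
      exact ⟨fun x hx => h x (Subgroup.mem_sup_left hx),
        fun x hx => h x (Subgroup.mem_sup_right hx)⟩
  have hct1 : Nat.card {χ : (ModRing Fq m)ˣ →* ℂˣ // ∀ x ∈ H₁, χ x = 1} = H₁.index :=
    card_trivialOn' H₁
  have hct2 : Nat.card {χ : (ModRing Fq m)ˣ →* ℂˣ // ∀ x ∈ H₁ ⊔ B, χ x = 1}
      = (H₁ ⊔ B).index := card_trivialOn' (H₁ ⊔ B)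
  rw [Nat.card_congr e2, hct1, hct2]
  -- cardinalities
  have hcardG : Nat.card (ModRing Fq m)ˣ = (q - 1) * q ^ m := by
    rw [card_modRing_units, ← hq, pow_succ, Nat.sub_mul, one_mul, mul_comm (q ^ m) q]
  have hcardFqu : Nat.card Fqˣ = q - 1 := by
    rw [Nat.card_eq_fintype_card, Fintype.card_units, hq]
  have hcardH₁ : Nat.card H₁ = q - 1 := by
    rw [← hcardFqu]
    exact (Nat.card_congr (MonoidHom.ofInjective (sHom_injective Fq m)).toEquiv).symm
  -- the combined hom
  set cHom : Fqˣ × Multiplicative Fq →* (ModRing Fq m)ˣ :=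
    { toFun := fun p => sHom Fq m p.1 * bHom Fq m hm p.2
      map_one' := by simp
      map_mul' := fun p r => by
        show sHom Fq m (p * r).1 * bHom Fq m hm (p * r).2
          = (sHom Fq m p.1 * bHom Fq m hm p.2) * (sHom Fq m r.1 * bHom Fq m hm r.2)
        rw [Prod.fst_mul, Prod.snd_mul, map_mul, map_mul]
        exact mul_mul_mul_comm (sHom Fq m p.1) (sHom Fq m r.1)
          (bHom Fq m hm p.2) (bHom Fq m hm r.2) } with hcHom
  have hcApp : ∀ p : Fqˣ × Multiplicative Fq, cHom p = sHom Fq m p.1 * bHom Fq m hm p.2 :=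
    fun p => rfl
  have hcInj : Function.Injective cHom := by
    rw [injective_iff_map_eq_one]
    rintro ⟨c, a⟩ h
    rw [hcApp] at h
    have hc : c = 1 := by
      have := congrArg (pHom Fq m) h
      simpa using this
    subst hc
    rw [map_one, one_mul] at h
    have ha : a = 1 := bHom_injective Fq m hm (h.trans (map_one _).symm)
    simp [ha]
  have hcRange : cHom.range = H₁ ⊔ B := by
    apply le_antisymm
    · rintro x ⟨⟨c, a⟩, rfl⟩
      rw [hcApp]
      exact mul_mem (Subgroup.mem_sup_left ⟨c, rfl⟩) (Subgroup.mem_sup_right ⟨a, rfl⟩)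
    · refine sup_le ?_ ?_
      · rintro x ⟨c, rfl⟩
        exact ⟨(c, 1), by simp [hcApp]⟩
      · rintro x ⟨a, rfl⟩
        exact ⟨(1, a), by simp [hcApp]⟩
  have hcardSup : Nat.card (H₁ ⊔ B : Subgroup (ModRing Fq m)ˣ) = (q - 1) * q := by
    rw [← hcRange]
    rw [← Nat.card_congr (MonoidHom.ofInjective hcInj).toEquiv]
    rw [Nat.card_prod, hcardFqu]
    congr 1
    rw [Nat.card_eq_fintype_card]
    simp [hq]
  -- indices
  have hi1 : H₁.index = q ^ m := by
    have h := Subgroup.card_mul_index H₁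
    rw [hcardH₁, hcardG] at h
    exact Nat.eq_of_mul_eq_mul_left (by omega) h
  have hi2 : (H₁ ⊔ B).index = q ^ (m - 1) := by
    have h := Subgroup.card_mul_index (H₁ ⊔ B)
    rw [hcardSup, hcardG] at h
    have hqm : q ^ m = q * q ^ (m - 1) := by
      conv_lhs => rw [show m = 1 + (m - 1) by omega]
      rw [pow_add, pow_one]
    rw [hqm, mul_assoc] at h
    have h2 := Nat.eq_of_mul_eq_mul_left (show 0 < q - 1 by omega) h
    exact Nat.eq_of_mul_eq_mul_left (by omega) h2
  rw [hi1, hi2]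
end

section
/- Let κ be a field, let n ≥ m ≥ 1 be integers, and let (λ_1,…,λ_m) ∈ κ^m be a nonzero tuple. Let F ∈ κ[x_1,…,x_n] be the coefficient of u^m in the polynomial (Σ_{r=1}^m λ_r u^{m−r}) · ∏_{i=1}^n (1 − u·x_i), regarded as a polynomial in u with coefficients in κ[x_1,…,x_n]. If (α_1,…,α_n) ∈ κ^n is a point at which all n partial derivatives ∂F/∂x_j vanish, then the set {α_1,…,α_n} has at most m−1 elements. -/
open Polynomial

noncomputable section AuxD

variable {κ : Type} [Field κ] {n : ℕ}

/-- Coefficient-wise partial derivative on `(MvPolynomial (Fin n) κ)[X]`. -/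
def myD (j : Fin n) (p : Polynomial (MvPolynomial (Fin n) κ)) :
    Polynomial (MvPolynomial (Fin n) κ) :=
  PolynomialModule.equivPolynomialSelf ((MvPolynomial.pderiv j).mapCoeffs p)

lemma myD_coeff (j : Fin n) (p : Polynomial (MvPolynomial (Fin n) κ)) (k : ℕ) :
    (myD j p).coeff k = MvPolynomial.pderiv j (p.coeff k) := by
  simp [myD, PolynomialModule.equivPolynomialSelf, Polynomial.coeff_ofFinsupp]

lemma myD_mul (j : Fin n) (p q : Polynomial (MvPolynomial (Fin n) κ)) :
    myD j (p * q) = p * myD j q + q * myD j p := by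
  unfold myD
  rw [Derivation.leibniz, map_add, LinearEquiv.map_smul, LinearEquiv.map_smul,
    smul_eq_mul, smul_eq_mul]

lemma myD_one (j : Fin n) : myD j (1 : Polynomial (MvPolynomial (Fin n) κ)) = 0 := by
  unfold myD
  rw [Derivation.map_one_eq_zero, map_zero]

lemma myD_prod_zero (j : Fin n) {ι : Type*} (s : Finset ι)
    (f : ι → Polynomial (MvPolynomial (Fin n) κ)) (h : ∀ i ∈ s, myD j (f i) = 0) :
    myD j (∏ i ∈ s, f i) = 0 := by
  classical
  induction s using Finset.induction_on with
  | empty => simpa using myD_one j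
  | insert _ _ hx ih =>
    rename_i a s
    rw [Finset.prod_insert hx, myD_mul, ih fun i hi => h i (Finset.mem_insert_of_mem hi),
      h a (Finset.mem_insert_self a s)]
    simp

lemma myD_factor (j i : Fin n) :
    myD j (1 - Polynomial.X * Polynomial.C (MvPolynomial.X i) :
      Polynomial (MvPolynomial (Fin n) κ)) =
      if i = j then -Polynomial.X else 0 := by
  classical
  ext k
  rw [myD_coeff]
  rcases eq_or_ne i j with rfl | hij
  · simp only [if_pos rfl]
    rcases k with _ | _ | k <;>
      simp [Polynomial.coeff_one, MvPolynomial.pderiv_X_self, coeff_X]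
  · simp only [if_neg hij]
    rcases k with _ | _ | k <;>
      simp [Polynomial.coeff_one, MvPolynomial.pderiv_X_of_ne hij]

lemma myD_P (j : Fin n) (m : ℕ) (lam : Fin m → κ) :
    myD j (∑ r : Fin m,
      Polynomial.C (MvPolynomial.C (lam r)) * Polynomial.X ^ (m - 1 - (r : ℕ))) = 0 := by
  classical
  ext k
  rw [myD_coeff]
  simp [Polynomial.finset_sum_coeff, Polynomial.coeff_C_mul, Polynomial.coeff_X_pow,
    mul_ite, mul_one, mul_zero, apply_ite (MvPolynomial.pderiv j)]

lemma coeff_rec (β : κ) (h gA : κ[X]) (hrel : (1 - Polynomial.X * Polynomial.C β) * h = gA) :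
    ∀ s : ℕ, h.coeff s = ∑ k ∈ Finset.range (s + 1), β ^ k * gA.coeff (s - k) := by
  have hco : ∀ s : ℕ, gA.coeff (s + 1) = h.coeff (s + 1) - β * h.coeff s := by
    intro s
    rw [← hrel]
    rw [sub_mul, one_mul, Polynomial.coeff_sub, mul_comm Polynomial.X, mul_assoc,
      Polynomial.coeff_C_mul, Polynomial.coeff_X_mul]
  intro s
  induction s with
  | zero =>
    rw [← hrel]
    simp [Polynomial.mul_coeff_zero]
  | succ s ih =>
    rw [Finset.sum_range_succ']
    have : ∀ k ∈ Finset.range (s + 1),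
        β ^ (k + 1) * gA.coeff (s + 1 - (k + 1)) = β * (β ^ k * gA.coeff (s - k)) := by
      intro k hk
      rw [Nat.succ_sub_succ, pow_succ]
      ring
    rw [Finset.sum_congr rfl this, ← Finset.mul_sum, ← ih, pow_zero, one_mul, Nat.sub_zero,
      hco s]
    ring

end AuxD

open Classical in
theorem stmt_14 (κ : Type) [Field κ] (n m : ℕ) (hm : 1 ≤ m) (hmn : m ≤ n)
    (lam : Fin m → κ) (hlam : lam ≠ 0)
    (F : MvPolynomial (Fin n) κ)
    (hF : F =
      Polynomial.coeff
        ((∑ r : Fin m,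
            Polynomial.C (MvPolynomial.C (lam r)) * Polynomial.X ^ (m - 1 - (r : ℕ))) *
          ∏ i : Fin n, (1 - Polynomial.X * Polynomial.C (MvPolynomial.X i)))
        m)
    (α : Fin n → κ)
    (hα : ∀ j : Fin n, MvPolynomial.eval α (MvPolynomial.pderiv j F) = 0) :
    (Finset.univ.image α).card ≤ m - 1 := by
  classical
  set f : Fin n → Polynomial (MvPolynomial (Fin n) κ) :=
    fun i => 1 - Polynomial.X * Polynomial.C (MvPolynomial.X i) with hf
  set P : Polynomial (MvPolynomial (Fin n) κ) :=
    ∑ r : Fin m, Polynomial.C (MvPolynomial.C (lam r)) * Polynomial.X ^ (m - 1 - (r : ℕ))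
    with hP
  set g : κ[X] := ∑ r : Fin m, Polynomial.C (lam r) * Polynomial.X ^ (m - 1 - (r : ℕ)) with hg
  set Afull : κ[X] := ∏ i : Fin n, (1 - Polynomial.X * Polynomial.C (α i)) with hAf
  set H : Fin n → κ[X] :=
    fun j => ∏ i ∈ Finset.univ.erase j, (1 - Polynomial.X * Polynomial.C (α i)) with hH
  have hm1 : m - 1 + 1 = m := Nat.succ_pred_eq_of_pos hm
  -- Step A : vanishing of the relevant coefficients
  have key : ∀ j : Fin n, (g * H j).coeff (m - 1) = 0 := by
    intro j
    have h1 : MvPolynomial.pderiv j F =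
        (P * ((∏ i ∈ Finset.univ.erase j, f i) * (-Polynomial.X))).coeff m := by
      rw [hF, ← myD_coeff]
      congr 1
      rw [myD_mul, hP, myD_P, mul_zero, add_zero, ← hP]
      congr 1
      rw [← Finset.mul_prod_erase Finset.univ f (Finset.mem_univ j), myD_mul,
        myD_prod_zero j _ f (fun i hi => by
          rw [hf, myD_factor, if_neg (Finset.ne_of_mem_erase hi)]),
        mul_zero, zero_add, hf, myD_factor, if_pos rfl]
    have h2 : MvPolynomial.eval α (MvPolynomial.pderiv j F) =
        ((P * ((∏ i ∈ Finset.univ.erase j, f i) * (-Polynomial.X))).map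
          (MvPolynomial.eval α : MvPolynomial (Fin n) κ →+* κ)).coeff m := by
      rw [Polynomial.coeff_map, h1]
    have h3 : ((P * ((∏ i ∈ Finset.univ.erase j, f i) * (-Polynomial.X))).map
          (MvPolynomial.eval α : MvPolynomial (Fin n) κ →+* κ)) =
        g * (H j * (-Polynomial.X)) := by
      rw [Polynomial.map_mul, Polynomial.map_mul]
      congr 1
      · rw [hP, hg, Polynomial.map_sum]
        refine Finset.sum_congr rfl fun r _ => ?_
        simp
      congr 1
      · rw [hH, Polynomial.map_prod]
        refine Finset.prod_congr rfl fun i _ => ?_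
        simp [hf]
      · simp
    have h4 := hα j
    rw [h2, h3] at h4
    have h5 : g * (H j * (-Polynomial.X)) = -((g * H j) * Polynomial.X) := by ring
    rw [h5, Polynomial.coeff_neg, ← hm1, Polynomial.coeff_mul_X, neg_eq_zero] at h4
    exact h4
  -- Step B
  by_contra hcon
  have hcard : m ≤ (Finset.univ.image α).card := by omega
  set c : ℕ → κ := fun s => (g * Afull).coeff s with hc
  set Cp : κ[X] := ∑ k ∈ Finset.range m, Polynomial.C (c (m - 1 - k)) * Polynomial.X ^ k
    with hCp
  have hrec : ∀ j : Fin n, ∀ s : ℕ,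
      (g * H j).coeff s = ∑ k ∈ Finset.range (s + 1), (α j) ^ k * c (s - k) := by
    intro j
    apply coeff_rec
    have hsplit : Afull = (1 - Polynomial.X * Polynomial.C (α j)) * H j :=
      (Finset.mul_prod_erase Finset.univ _ (Finset.mem_univ j)).symm
    rw [hsplit]
    ring
  have heval : ∀ b ∈ Finset.univ.image α, Cp.eval b = 0 := by
    intro b hb
    obtain ⟨j, -, rfl⟩ := Finset.mem_image.mp hb
    have h6 := hrec j (m - 1)
    rw [key j, hm1] at h6
    rw [hCp]
    simp only [Polynomial.eval_finset_sum, Polynomial.eval_mul, Polynomial.eval_C,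
      Polynomial.eval_pow, Polynomial.eval_X]
    rw [show (∑ k ∈ Finset.range m, c (m - 1 - k) * α j ^ k) =
      ∑ k ∈ Finset.range m, α j ^ k * c (m - 1 - k) from
      Finset.sum_congr rfl fun k _ => mul_comm _ _]
    exact h6.symm
  have hCdeg : Cp.natDegree ≤ m - 1 := by
    apply Polynomial.natDegree_sum_le_of_forall_le
    intro k hk
    refine le_trans (Polynomial.natDegree_mul_le) ?_
    simp only [Polynomial.natDegree_C, Polynomial.natDegree_X_pow, zero_add]
    have := Finset.mem_range.mp hk
    omega
  have hCp0 : Cp = 0 := by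
    apply Polynomial.eq_zero_of_natDegree_lt_card_of_eval_eq_zero' Cp _ heval
    omega
  have hc0 : ∀ s ≤ m - 1, c s = 0 := by
    intro s hs
    have h7 := congrArg (fun p => Polynomial.coeff p (m - 1 - s)) hCp0
    simp only [hCp, Polynomial.finset_sum_coeff, Polynomial.coeff_C_mul,
      Polynomial.coeff_X_pow, Polynomial.coeff_zero, mul_ite, mul_one, mul_zero] at h7
    rw [Finset.sum_eq_single (m - 1 - s)] at h7
    · rw [if_pos rfl] at h7
      rw [show m - 1 - (m - 1 - s) = s by omega] at h7
      exact h7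
    · intro k hk hne
      rw [if_neg (by omega)]
    · intro hmem
      exact absurd (Finset.mem_range.mpr (by omega)) hmem
  -- g is nonzero with small degree while Afull has unit constant coefficient
  obtain ⟨r0, hr0⟩ := Function.ne_iff.mp hlam
  have hgc : g.coeff (m - 1 - (r0 : ℕ)) = lam r0 := by
    rw [hg, Polynomial.finset_sum_coeff]
    rw [Finset.sum_eq_single r0]
    · simp
    · intro r hr hne
      have h8 : (m : ℕ) - 1 - (r : ℕ) ≠ m - 1 - (r0 : ℕ) := by
        have := r.2
        have := r0.2
        intro h
        exact hne (Fin.ext (by omega))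
      simp only [Polynomial.coeff_C_mul, Polynomial.coeff_X_pow]
      rw [if_neg (Ne.symm h8), mul_zero]
    · intro hmem
      exact absurd (Finset.mem_univ r0) hmem
  have hgne : g ≠ 0 := by
    intro h
    rw [h, Polynomial.coeff_zero] at hgc
    exact hr0 hgc.symm
  have hgdeg : g.natDegree ≤ m - 1 := by
    rw [hg]
    apply Polynomial.natDegree_sum_le_of_forall_le
    intro r _
    refine le_trans (Polynomial.natDegree_mul_le) ?_
    simp only [Polynomial.natDegree_C, Polynomial.natDegree_X_pow, zero_add]
    omega
  have hA0 : Afull.coeff 0 = 1 := by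
    rw [Polynomial.coeff_zero_eq_eval_zero, hAf, Polynomial.eval_prod]
    simp
  have hAne : Afull ≠ 0 := by
    intro h
    rw [h, Polynomial.coeff_zero] at hA0
    exact one_ne_zero hA0.symm
  have hAtd : Afull.natTrailingDegree = 0 :=
    Nat.le_zero.mp (Polynomial.natTrailingDegree_le_of_ne_zero (hA0 ▸ one_ne_zero))
  have hAtc : Afull.trailingCoeff = 1 := by
    rw [Polynomial.trailingCoeff, hAtd, hA0]
  have hdle : g.natTrailingDegree ≤ m - 1 :=
    le_trans (Polynomial.natTrailingDegree_le_natDegree g) hgdeg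
  have hfinal : c g.natTrailingDegree ≠ 0 := by
    have h9 : (g * Afull).natTrailingDegree = g.natTrailingDegree := by
      rw [Polynomial.natTrailingDegree_mul hgne hAne, hAtd, add_zero]
    have h10 : (g * Afull).trailingCoeff = g.trailingCoeff := by
      rw [Polynomial.trailingCoeff_mul, hAtc, mul_one]
    intro h
    have h11 : (g * Afull).trailingCoeff = 0 := by
      rw [Polynomial.trailingCoeff, h9]
      exact h
    rw [h10, Polynomial.trailingCoeff_eq_zero] at h11
    exact hgne h11
  exact hfinal (hc0 _ hdle)
end

section
/- Let κ be a field, let n ≥ 1 and m ≥ 1 be integers, and let a_1,…,a_n ∈ κ be elements such that the set {a_1,…,a_n} has at most m−1 elements. Let P(u) = ∏_{i=1}^n (1 − u·a_i) ∈ κ[u]. If the coefficients of u, u^2, …, u^m in P all vanish (that is, P ≡ 1 mod u^{m+1}), then the formal derivative P′ of P is identically zero. In particular, if κ has characteristic zero, then a_i = 0 for all i. -/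
open Polynomial Finset

theorem aux_derivative_prod {R ι : Type*} [CommSemiring R] [DecidableEq ι]
    (s : Finset ι) (f : ι → Polynomial R) :
    Polynomial.derivative (∏ i ∈ s, f i)
      = ∑ i ∈ s, (∏ j ∈ s.erase i, f j) * Polynomial.derivative (f i) := by
  rw [Finset.prod_eq_multiset_prod, Polynomial.derivative_prod, Finset.sum_eq_multiset_sum]
  congr 1

open Classical in
theorem stmt_15 (κ : Type) [Field κ] (n m : ℕ) (hn : 1 ≤ n) (hm : 1 ≤ m)
    (a : Fin n → κ) (ha : (Finset.univ.image a).card ≤ m - 1)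
    (P : Polynomial κ)
    (hP : P = ∏ i : Fin n, (1 - Polynomial.X * Polynomial.C (a i)))
    (hcoeff : ∀ j : ℕ, 1 ≤ j → j ≤ m → P.coeff j = 0) :
    Polynomial.derivative P = 0 ∧ (CharZero κ → ∀ i, a i = 0) := by
  classical
  set S : Finset κ := Finset.univ.image a with hS
  -- the constant coefficient of P is 1
  have hP0 : P.coeff 0 = 1 := by
    rw [Polynomial.coeff_zero_eq_eval_zero, hP]
    simp [Polynomial.eval_prod]
  -- auxiliary polynomials Q i = ∏_{j ≠ i} (1 - X * C (a j))
  set Q : Fin n → Polynomial κ :=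
    fun i => ∏ j ∈ Finset.univ.erase i, (1 - X * C (a j)) with hQ
  have hPQ : ∀ i, P = (1 - X * C (a i)) * Q i := by
    intro i
    rw [hP]
    exact (Finset.mul_prod_erase _ _ (Finset.mem_univ i)).symm
  have hQrec : ∀ i, Q i = P + X * (C (a i) * Q i) := by
    intro i
    rw [hPQ i]; ring
  -- coefficients of Q i up to degree m
  have hQcoeff : ∀ i, ∀ k, k ≤ m → (Q i).coeff k = (a i) ^ k := by
    intro i k
    induction k with
    | zero =>
      intro _
      have := congrArg (fun p => Polynomial.coeff p 0) (hQrec i)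
      simp only [Polynomial.coeff_add, Polynomial.coeff_X_mul_zero] at this
      simpa [hP0] using this
    | succ k ih =>
      intro hk
      have := congrArg (fun p => Polynomial.coeff p (k + 1)) (hQrec i)
      simp only [Polynomial.coeff_add, Polynomial.coeff_X_mul,
        Polynomial.coeff_C_mul] at this
      rw [this, hcoeff (k + 1) (Nat.succ_le_succ (Nat.zero_le k)) hk,
        ih (le_of_lt hk), zero_add, pow_succ]
      ring
  -- derivative of P as a sum
  have hder : Polynomial.derivative P = ∑ i : Fin n, Q i * (-(C (a i))) := by
    rw [hP, aux_derivative_prod]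
    refine Finset.sum_congr rfl fun i _ => ?_
    congr 1
    simp
  -- power sums vanish
  have hpow : ∀ k, 1 ≤ k → k ≤ m → ∑ i : Fin n, (a i) ^ k = 0 := by
    intro k hk1 hkm
    obtain ⟨j, rfl⟩ := Nat.exists_eq_add_of_le hk1
    have h1 : (Polynomial.derivative P).coeff j = 0 := by
      rw [Polynomial.coeff_derivative, hcoeff (j + 1) (Nat.succ_le_succ (Nat.zero_le j))
        (by omega)]
      ring
    have h2 : (Polynomial.derivative P).coeff j
        = -∑ i : Fin n, (a i) ^ (1 + j) := by
      rw [hder, Polynomial.finset_sum_coeff]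
      rw [← Finset.sum_neg_distrib]
      refine Finset.sum_congr rfl fun i _ => ?_
      rw [show Q i * -C (a i) = Q i * C (-(a i)) by rw [map_neg],
        Polynomial.coeff_mul_C, hQcoeff i j (by omega)]
      rw [add_comm 1 j, pow_succ]
      ring
    rw [h1] at h2
    have := neg_eq_zero.mp h2.symm
    exact this
  -- fiber cardinalities
  set c : κ → ℕ := fun b => (Finset.univ.filter (fun i => a i = b)).card with hc
  -- weighted power sums over distinct values
  have hwsum : ∀ k, 1 ≤ k → k ≤ m → ∑ b ∈ S, (c b : κ) * b ^ k = 0 := by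
    intro k hk1 hkm
    have := Finset.sum_comp (s := Finset.univ) (fun b : κ => b ^ k) a
    rw [← hpow k hk1 hkm, this]
    refine Finset.sum_congr rfl fun b _ => ?_
    rw [nsmul_eq_mul]
  -- S is nonempty
  have hSne : S.Nonempty := ⟨a ⟨0, hn⟩, Finset.mem_image_of_mem a (Finset.mem_univ _)⟩
  have hScard : 1 ≤ S.card := Finset.card_pos.mpr hSne
  -- key claim: (c b : κ) * b = 0 for each b in S
  have hkey : ∀ b ∈ S, (c b : κ) * b = 0 := by
    intro b hb
    set L : Polynomial κ := Lagrange.basis S id b with hL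
    have hinj : Set.InjOn (id : κ → κ) S := fun x _ y _ h => h
    have hdeg : L.natDegree < S.card := by
      rw [hL, Lagrange.natDegree_basis hinj hb]
      omega
    have heval : ∀ b' ∈ S, L.eval b' = if b' = b then 1 else 0 := by
      intro b' hb'
      by_cases h : b' = b
      · subst h
        simp only [if_pos rfl]
        exact Lagrange.eval_basis_self hinj hb'
      · rw [if_neg h]
        simpa using Lagrange.eval_basis_of_ne (v := id) (fun hbb => h hbb.symm) hb'
    calc (c b : κ) * b = ∑ b' ∈ S, (c b' : κ) * b' * L.eval b' := by
          symm
          rw [Finset.sum_eq_single b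
            (fun b' hb' hne => by rw [heval b' hb', if_neg hne, mul_zero])
            (fun hnb => absurd hb hnb)]
          rw [heval b hb, if_pos rfl, mul_one]
      _ = ∑ b' ∈ S, ∑ k ∈ Finset.range S.card, L.coeff k * ((c b' : κ) * b' ^ (k + 1)) := by
          refine Finset.sum_congr rfl fun b' _ => ?_
          rw [Polynomial.eval_eq_sum_range' hdeg, Finset.mul_sum]
          refine Finset.sum_congr rfl fun k _ => ?_
          rw [pow_succ]
          ring
      _ = ∑ k ∈ Finset.range S.card, L.coeff k * ∑ b' ∈ S, (c b' : κ) * b' ^ (k + 1) := by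
          rw [Finset.sum_comm]
          exact Finset.sum_congr rfl fun k _ => (Finset.mul_sum _ _ _).symm
      _ = 0 := by
          refine Finset.sum_eq_zero fun k hk => ?_
          rw [hwsum (k + 1) (Nat.succ_le_succ (Nat.zero_le k))
            (by have := Finset.mem_range.mp hk; omega), mul_zero]
  -- derivative of P is zero
  have hderzero : Polynomial.derivative P = 0 := by
    have hPprod : P = ∏ b ∈ S, (1 - X * C b) ^ (c b) := by
      rw [hP, hS]
      exact Finset.prod_comp (fun b : κ => 1 - X * C b) a
    rw [hPprod, aux_derivative_prod]
    refine Finset.sum_eq_zero fun b hb => ?_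
    have hpz : Polynomial.derivative ((1 - X * C b) ^ (c b)) = 0 := by
      rw [Polynomial.derivative_pow]
      have hd1 : Polynomial.derivative (1 - X * C b) = -C b := by simp
      rw [hd1]
      have h0 : (c b : Polynomial κ) * (-C b) = 0 := by
        have hcast : (c b : Polynomial κ) = C (c b : κ) := by simp
        rw [hcast, ← Polynomial.C_neg, ← Polynomial.C_mul,
          show (c b : κ) * -b = -((c b : κ) * b) by ring, hkey b hb]
        simp
      calc (c b : Polynomial κ) * (1 - X * C b) ^ (c b - 1) * -C b
          = (1 - X * C b) ^ (c b - 1) * ((c b : Polynomial κ) * -C b) := by ring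
        _ = 0 := by rw [h0, mul_zero]
    rw [hpz, mul_zero]
  refine ⟨hderzero, fun hchar i => ?_⟩
  have hb : a i ∈ S := Finset.mem_image_of_mem a (Finset.mem_univ i)
  have hcb : 1 ≤ c (a i) := by
    rw [hc]
    exact Finset.card_pos.mpr ⟨i, by simp⟩
  have := hkey (a i) hb
  rcases mul_eq_zero.mp this with h | h
  · exact absurd h (Nat.cast_ne_zero.mpr (by omega))
  · exact h
end

section
/- Let 𝔽_q be a finite field, let f ∈ 𝔽_q[T] be a monic squarefree polynomial of degree n ≥ 1, let S ⊆ 𝔽̄_q be the set of roots of f in a fixed algebraic closure 𝔽̄_q (so |S| = n), and let σ : S → S be the permutation x ↦ x^q (it is well defined and bijective since Frobenius permutes the roots of f). Then μ(f) = (−1)^n · sign(σ), where sign(σ) denotes the sign of the permutation σ. -/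
open Polynomial
open scoped Classical

lemma exists_qfrob (Fq : Type) [Field Fq] [Fintype Fq] (q : ℕ) (hq : q = Fintype.card Fq) :
    ∃ φ : (AlgebraicClosure Fq) →ₐ[Fq] (AlgebraicClosure Fq), ∀ x, φ x = x ^ q := by
  set K := AlgebraicClosure Fq
  set p := ringChar Fq with hp
  haveI : CharP Fq p := ringChar.charP Fq
  haveI hfact : Fact p.Prime := ⟨CharP.char_is_prime Fq p⟩
  obtain ⟨k, hpk, hcard⟩ := FiniteField.card Fq p
  haveI : CharP K p := charP_of_injective_algebraMap (algebraMap Fq K).injective p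
  haveI : ExpChar K p := ExpChar.prime hfact.out
  have hqpow : q = p ^ (k : ℕ) := by rw [hq, hcard]
  refine ⟨AlgHom.mk' (iterateFrobenius K p k) fun c x => ?_, fun x => ?_⟩
  · simp only [Algebra.smul_def, map_mul]
    congr 1
    rw [iterateFrobenius_def, ← map_pow, ← hqpow, hq, FiniteField.pow_card]
  · rw [AlgHom.coe_mk', iterateFrobenius_def, hqpow]

open Classical in
/-- The function-field Möbius function: `(-1)^r` if `f` is squarefree with `r`
monic irreducible factors, and `0` otherwise. -/
noncomputable def ffMoebius {Fq : Type} [Field Fq] (f : Fq[X]) : ℤ :=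
  if Squarefree f then (-1) ^ Multiset.card (UniqueFactorizationMonoid.factors f) else 0

section Aux

variable {Fq : Type} [Field Fq] [Fintype Fq]

local notation "K" => AlgebraicClosure Fq

lemma exists_qfrob' (q : ℕ) (hq : q = Fintype.card Fq) :
    ∃ φ : K →ₐ[Fq] K, ∀ x, φ x = x ^ q := exists_qfrob Fq q hq

lemma aeval_pow_q {q : ℕ} (hq : q = Fintype.card Fq)
    (g : Fq[X]) (x : K) : (aeval (x ^ q) g) = (aeval x g) ^ q := by
  obtain ⟨φ, hφ⟩ := exists_qfrob Fq q hq
  rw [← hφ, Polynomial.aeval_algHom_apply, hφ]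

lemma roots_nodup_card {f : Fq[X]} (hsf : Squarefree f) :
    (f.aroots K).Nodup ∧ (f.aroots K).toFinset.card = f.natDegree := by
  have hsep : f.Separable := (PerfectField.separable_iff_squarefree).mpr hsf
  have hnd : (f.aroots K).Nodup := nodup_roots (hsep.map)
  refine ⟨hnd, ?_⟩
  rw [Multiset.toFinset_card_of_nodup hnd]
  rw [Polynomial.aroots, ← (IsAlgClosed.splits (f.map (algebraMap Fq K))).natDegree_eq_card_roots, natDegree_map]

lemma mem_rootFinset {g : Fq[X]} {x : K} :
    x ∈ (g.aroots K).toFinset ↔ g ≠ 0 ∧ aeval x g = 0 := by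
  rw [Multiset.mem_toFinset, Polynomial.mem_aroots]

lemma rootFinset_stable {q : ℕ} (hq : q = Fintype.card Fq) {g : Fq[X]} {x : K}
    (hx : x ∈ (g.aroots K).toFinset) : x ^ q ∈ (g.aroots K).toFinset := by
  rw [mem_rootFinset] at hx ⊢
  exact ⟨hx.1, by rw [aeval_pow_q hq, hx.2, zero_pow (by simp [hq, Fintype.card_ne_zero])]⟩

-- every element of Fq⟮x⟯ is fixed by z ↦ z^(q^m) if x is
lemma adjoin_fixed {q : ℕ} (hq : q = Fintype.card Fq) {x : K} (hint : IsIntegral Fq x)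
    (m : ℕ) (hxm : x ^ q ^ m = x) {z : K} (hz : z ∈ IntermediateField.adjoin Fq {x}) :
    z ^ q ^ m = z := by
  obtain ⟨φ, hφ⟩ := exists_qfrob' q hq
  have hiter : ∀ (j : ℕ) (y : K), (φ ^ j) y = y ^ q ^ j := by
    intro j
    induction j with
    | zero => intro y; simp
    | succ j ih =>
      intro y
      have h1 : (φ ^ (j+1)) y = (φ ^ j) (φ y) := by
        rw [pow_succ]; rfl
      rw [h1, ih, hφ, ← pow_mul, pow_succ']
  have hmem : z ∈ Algebra.adjoin Fq ({x} : Set K) := by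
    rw [← IntermediateField.adjoin_simple_toSubalgebra_of_isAlgebraic hint.isAlgebraic]
    exact hz
  have hle : Algebra.adjoin Fq ({x} : Set K) ≤ AlgHom.equalizer (φ ^ m : K →ₐ[Fq] K) (AlgHom.id Fq K) := by
    apply Algebra.adjoin_le
    intro y hy
    rw [Set.mem_singleton_iff] at hy
    subst hy
    show (φ ^ m) y = y
    rw [hiter m y]
    exact hxm
  have := hle hmem
  rw [AlgHom.mem_equalizer] at this
  have h2 := this
  rw [hiter m z] at h2
  exact h2

lemma deg_le_of_fixed {q : ℕ} (hq : q = Fintype.card Fq) {f : Fq[X]} (hf : f.Monic)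
    (hirr : Irreducible f) {x : K} (hx : aeval x f = 0) {m : ℕ} (hm : 1 ≤ m)
    (hxm : x ^ q ^ m = x) : f.natDegree ≤ m := by
  have hq1 : 1 < q := hq ▸ Fintype.one_lt_card
  have hint : IsIntegral Fq x := ⟨f, hf, by rwa [← aeval_def]⟩
  have hmin : minpoly Fq x = f := (minpoly.eq_of_irreducible_of_monic hirr hx hf).symm
  set E := IntermediateField.adjoin Fq ({x} : Set K) with hE
  haveI : FiniteDimensional Fq E := IntermediateField.adjoin.finiteDimensional hint
  haveI : Finite E := Module.finite_of_finite Fq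
  haveI : Fintype E := Fintype.ofFinite E
  have hcardE : Fintype.card E = q ^ f.natDegree := by
    have h : Fintype.card E = Fintype.card Fq ^ Module.finrank Fq E := Module.card_eq_pow_finrank
    rw [h, IntermediateField.adjoin.finrank hint, hmin, hq]
  set P : (AlgebraicClosure Fq)[X] := X ^ q ^ m - X with hP
  have hqm : 1 < q ^ m := Nat.one_lt_pow (by omega) hq1
  have hPdeg : P.natDegree = q ^ m := by
    rw [hP]
    have : (X : (AlgebraicClosure Fq)[X]).natDegree < (X ^ q ^ m : (AlgebraicClosure Fq)[X]).natDegree := by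
      rw [natDegree_X, natDegree_X_pow]; omega
    rw [natDegree_sub_eq_left_of_natDegree_lt this, natDegree_X_pow]
  have hPne : P ≠ 0 := fun h => by rw [h, natDegree_zero] at hPdeg; omega
  have hroot : ∀ z : E, (z : K) ∈ P.roots.toFinset := by
    intro z
    rw [Multiset.mem_toFinset, Polynomial.mem_roots hPne]
    have := adjoin_fixed hq hint m hxm z.2
    simp [hP, IsRoot, this]
  have hinj : Function.Injective (fun z : E => (⟨(z : K), hroot z⟩ : {y // y ∈ P.roots.toFinset})) := by
    intro a b hab
    simp only [Subtype.mk.injEq] at hab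
    exact Subtype.ext hab
  have hle1 : Fintype.card E ≤ P.roots.toFinset.card := by
    have := Fintype.card_le_of_injective _ hinj
    rwa [Fintype.card_coe] at this
  have hle2 : P.roots.toFinset.card ≤ q ^ m := le_trans (Multiset.toFinset_card_le _)
    (le_trans (Polynomial.card_roots' P) (le_of_eq hPdeg))
  have : q ^ f.natDegree ≤ q ^ m := hcardE ▸ le_trans hle1 hle2
  exact (Nat.pow_le_pow_iff_right hq1).mp this

lemma pow_q_pow_deg {q : ℕ} (hq : q = Fintype.card Fq) {f : Fq[X]} (hf : f.Monic)
    (hirr : Irreducible f) {x : K} (hx : aeval x f = 0) :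
    x ^ q ^ f.natDegree = x := by
  have hint : IsIntegral Fq x := ⟨f, hf, by rwa [← aeval_def]⟩
  have hmin : minpoly Fq x = f := (minpoly.eq_of_irreducible_of_monic hirr hx hf).symm
  set E := IntermediateField.adjoin Fq ({x} : Set K) with hE
  haveI : FiniteDimensional Fq E := IntermediateField.adjoin.finiteDimensional hint
  haveI : Finite E := Module.finite_of_finite Fq
  haveI : Fintype E := Fintype.ofFinite E
  have hcardE : Fintype.card E = q ^ f.natDegree := by
    have h : Fintype.card E = Fintype.card Fq ^ Module.finrank Fq E := Module.card_eq_pow_finrank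
    rw [h, IntermediateField.adjoin.finrank hint, hmin, hq]
  have hxE : x ∈ E := IntermediateField.mem_adjoin_simple_self Fq x
  have := FiniteField.pow_card (⟨x, hxE⟩ : E)
  rw [hcardE] at this
  have h2 := congrArg (Subtype.val) this
  push_cast at h2
  exact h2

lemma exists_qfrob_iter (q : ℕ) (hq : q = Fintype.card Fq) :
    ∃ φ : K →ₐ[Fq] K, ∀ (j : ℕ) (y : K), (φ ^ j) y = y ^ q ^ j := by
  obtain ⟨φ, hφ⟩ := exists_qfrob' q hq
  refine ⟨φ, fun j => ?_⟩
  induction j with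
  | zero => intro y; simp
  | succ j ih =>
    intro y
    have h1 : (φ ^ (j+1)) y = (φ ^ j) (φ y) := by rw [pow_succ]; rfl
    rw [h1, ih, hφ, ← pow_mul, pow_succ']

lemma aeval_pow_q_pow {q : ℕ} (hq : q = Fintype.card Fq) (g : Fq[X]) (x : K) (i : ℕ) :
    aeval (x ^ q ^ i) g = (aeval x g) ^ q ^ i := by
  induction i with
  | zero => simp
  | succ i ih =>
    rw [pow_succ, pow_mul, aeval_pow_q hq, ih, ← pow_mul, ← pow_succ]

lemma pow_q_pow_inj {q : ℕ} (hq : q = Fintype.card Fq) (i : ℕ) :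
    Function.Injective (fun z : K => z ^ q ^ i) := by
  obtain ⟨φ, hφ⟩ := exists_qfrob_iter q hq
  have : (fun z : K => z ^ q ^ i) = ⇑(φ ^ i : K →ₐ[Fq] K) := by
    funext z; rw [hφ]
  rw [this]
  exact (φ ^ i : K →ₐ[Fq] K).toRingHom.injective

lemma irreducible_case {q : ℕ} (hq : q = Fintype.card Fq) {f : Fq[X]} (hf : f.Monic)
    (hirr : Irreducible f) {n : ℕ} (hfn : f.natDegree = n) (hn : 1 ≤ n)
    (σ : Equiv.Perm {x : K // x ∈ (f.aroots K).toFinset})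
    (hσ : ∀ x, ((σ x : K)) = (x : K) ^ q) :
    (-1 : ℤ) ^ n * (Equiv.Perm.sign σ : ℤ) = -1 := by
  have hq1 : 1 < q := hq ▸ Fintype.one_lt_card
  have hsf : Squarefree f := hirr.squarefree
  obtain ⟨hnd, hScard⟩ := roots_nodup_card hsf
  rw [hfn] at hScard
  have hcardα : Fintype.card {x : K // x ∈ (f.aroots K).toFinset} = n := by
    rw [Fintype.card_coe, hScard]
  -- pick a root
  have hSne : (f.aroots K).toFinset.Nonempty := by
    rw [← Finset.card_pos, hScard]; omega
  obtain ⟨x, hxS⟩ := hSne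
  obtain ⟨hf0, hx⟩ := mem_rootFinset.mp hxS
  -- the orbit
  have umem : ∀ i : ℕ, x ^ q ^ i ∈ (f.aroots K).toFinset := by
    intro i
    exact mem_rootFinset.mpr ⟨hf0, by
      rw [aeval_pow_q_pow hq, hx, zero_pow (pow_ne_zero i (by omega))]⟩
  let u : ℕ → {x : K // x ∈ (f.aroots K).toFinset} := fun i => ⟨x ^ q ^ i, umem i⟩
  have hval : ∀ i, (u i : K) = x ^ q ^ i := fun i => rfl
  have distinct : ∀ i j : ℕ, i < j → j < n → x ^ q ^ i ≠ x ^ q ^ j := by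
    intro i j hij hjn heq
    set d := j - i with hd
    have hdj : j = d + i := by omega
    have h2 : (x : K) ^ q ^ i = (x ^ q ^ d) ^ q ^ i := by
      rw [← pow_mul, ← pow_add, ← hdj]
      exact heq
    have h3 : x = x ^ q ^ d := pow_q_pow_inj hq i h2
    have h4 : f.natDegree ≤ d := deg_le_of_fixed hq hf hirr hx (by omega) h3.symm
    omega
  have hun0 : x ^ q ^ n = x := by
    have := pow_q_pow_deg hq hf hirr hx
    rwa [hfn] at this
  -- image is everything
  have hT : (Finset.range n).image (fun i => x ^ q ^ i) = (f.aroots K).toFinset := by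
    apply Finset.eq_of_subset_of_card_le
    · intro y hy
      obtain ⟨i, _, rfl⟩ := Finset.mem_image.mp hy
      exact umem i
    · rw [hScard, Finset.card_image_of_injOn]
      · rw [Finset.card_range]
      · intro i hi j hj heq
        simp only [Finset.coe_range, Set.mem_Iio] at hi hj
        by_contra hne
        rcases lt_or_gt_of_ne hne with h | h
        · exact distinct i j h hj heq
        · exact distinct j i h hi heq.symm
  have hsurj : ∀ y : {x : K // x ∈ (f.aroots K).toFinset}, ∃ i, i < n ∧ u i = y := by
    intro y
    have : (y : K) ∈ (Finset.range n).image (fun i => x ^ q ^ i) := by rw [hT]; exact y.2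
    obtain ⟨i, hi, hiy⟩ := Finset.mem_image.mp this
    exact ⟨i, Finset.mem_range.mp hi, Subtype.ext hiy⟩
  have hstep : ∀ i, σ (u i) = u (i + 1) := by
    intro i
    apply Subtype.ext
    rw [hσ (u i), hval, hval, ← pow_mul, ← pow_succ]
  have hpowi : ∀ i, (σ ^ i) (u 0) = u i := by
    intro i
    induction i with
    | zero => rfl
    | succ i ih => rw [pow_succ', Equiv.Perm.mul_apply, ih, hstep]
  rcases eq_or_lt_of_le hn with h1 | h2
  · -- n = 1
    haveI : Subsingleton {x : K // x ∈ (f.aroots K).toFinset} := by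
      rw [← Fintype.card_le_one_iff_subsingleton, hcardα, ← h1]
    have : σ = 1 := Subsingleton.elim _ _
    rw [this, ← h1]
    simp
  · -- n ≥ 2
    have hcyc : σ.IsCycle := by
      refine ⟨u 0, ?_, fun y hy => ?_⟩
      · rw [hstep 0]
        intro hc
        exact distinct 0 1 (by omega) h2 (congrArg Subtype.val hc).symm
      · obtain ⟨i, _, rfl⟩ := hsurj y
        exact ⟨(i : ℤ), by rw [zpow_natCast, hpowi]⟩
    have hsupp : σ.support = Finset.univ := by
      ext y
      simp only [Equiv.Perm.mem_support, Finset.mem_univ, iff_true]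
      obtain ⟨i, hi, rfl⟩ := hsurj y
      rw [hstep i]
      rcases lt_or_eq_of_le (by omega : i + 1 ≤ n) with hin | hin
      · intro hc
        exact distinct i (i+1) (by omega) hin (congrArg Subtype.val hc).symm
      · have h0 : u (i+1) = u 0 := by
          apply Subtype.ext
          rw [hval, hval, hin, pow_zero, pow_one, hun0]
        rw [h0]
        intro hc
        have : i ≠ 0 := by omega
        exact distinct 0 i (by omega) hi (congrArg Subtype.val hc)
    have hsign : Equiv.Perm.sign σ = -(-1) ^ n := by
      rw [hcyc.sign, hsupp]
      congr 1
      rw [Finset.card_univ, hcardα]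
    rw [hsign]
    have hcast : (((-(-1) ^ n : ℤˣ)) : ℤ) = -(-1) ^ n := by push_cast; ring
    rw [hcast, mul_neg, ← mul_pow]
    norm_num

lemma sign_decomp {α : Type} [Fintype α] [DecidableEq α] (σ : Equiv.Perm α) (p : α → Prop)
    [DecidablePred p] (hp : ∀ x, p x ↔ p (σ x)) :
    σ = Equiv.Perm.ofSubtype (σ.subtypePerm (fun x => (hp x).symm)) *
        Equiv.Perm.ofSubtype (σ.subtypePerm (p := fun x => ¬ p x) (fun x => (not_congr (hp x)).symm)) := by
  set τ := σ.subtypePerm (fun x => (hp x).symm) with hτ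
  set ρ := σ.subtypePerm (p := fun x => ¬ p x) (fun x => (not_congr (hp x)).symm) with hρ
  ext x
  rw [Equiv.Perm.mul_apply]
  by_cases hx : p x
  · have h1 : Equiv.Perm.ofSubtype ρ x = x :=
      Equiv.Perm.ofSubtype_apply_of_not_mem ρ (a := x) (not_not_intro hx)
    have h2 : Equiv.Perm.ofSubtype τ x = τ ⟨x, hx⟩ :=
      Equiv.Perm.ofSubtype_apply_of_mem τ (a := x) hx
    rw [h1, h2]
    rfl
  · have h1 : Equiv.Perm.ofSubtype ρ x = ρ ⟨x, hx⟩ :=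
      Equiv.Perm.ofSubtype_apply_of_mem ρ (a := x) hx
    have hρx : (ρ ⟨x, hx⟩ : α) = σ x := rfl
    have h3 : ¬ p (σ x) := fun hc => hx ((hp x).mpr hc)
    have h2 : Equiv.Perm.ofSubtype τ (σ x) = σ x :=
      Equiv.Perm.ofSubtype_apply_of_not_mem τ (a := σ x) h3
    rw [h1, hρx, h2]


lemma ffMoebius_mul {Fq : Type} [Field Fq] {g h : Fq[X]} (hg : g ≠ 0) (hh : h ≠ 0)
    (hsf : Squarefree (g * h)) : ffMoebius (g * h) = ffMoebius g * ffMoebius h := by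
  have hsg : Squarefree g := hsf.squarefree_of_dvd (dvd_mul_right g h)
  have hsh : Squarefree h := hsf.squarefree_of_dvd (dvd_mul_left h g)
  have hcard := Multiset.card_eq_card_of_rel (UniqueFactorizationMonoid.factors_mul hg hh)
  rw [ffMoebius, ffMoebius, ffMoebius, if_pos hsf, if_pos hsg, if_pos hsh,
    hcard, Multiset.card_add, pow_add]

lemma ffMoebius_irreducible {Fq : Type} [Field Fq] {f : Fq[X]} (hirr : Irreducible f) :
    ffMoebius f = -1 := by
  obtain ⟨P, _, hfac⟩ := prime_factors_irreducible hirr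
    ⟨fun b hb => UniqueFactorizationMonoid.prime_of_factor b hb,
     UniqueFactorizationMonoid.factors_prod hirr.ne_zero⟩
  rw [ffMoebius, if_pos hirr.squarefree, hfac]
  simp

theorem key_induction (q : ℕ) (hq : q = Fintype.card Fq) :
    ∀ n : ℕ, ∀ f : Fq[X], f.Monic → f.natDegree = n → 1 ≤ n → Squarefree f →
    ∀ σ : Equiv.Perm {x : K // x ∈ (f.aroots K).toFinset},
      (∀ x, ((σ x : K)) = (x : K) ^ q) →
      ffMoebius f = (-1) ^ n * (Equiv.Perm.sign σ : ℤ) := by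
  intro n
  induction n using Nat.strong_induction_on with
  | _ n IH =>
  intro f hf hfn hn hsf σ hσ
  by_cases hirr : Irreducible f
  · rw [ffMoebius_irreducible hirr, irreducible_case hq hf hirr hfn hn σ hσ]
  · -- composite case
    have hf0 : f ≠ 0 := hf.ne_zero
    have hfu : ¬ IsUnit f := by
      intro hu
      have := Polynomial.natDegree_eq_zero_of_isUnit hu
      omega
    have h2 : ¬ ∀ a b : Fq[X], f = a * b → IsUnit a ∨ IsUnit b :=
      fun hall => hirr (irreducible_iff.mpr ⟨hfu, hall⟩)
    push_neg at h2
    obtain ⟨a, b, hab, hua, hub⟩ := h2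
    have ha0 : a ≠ 0 := fun h => hf0 (by rw [hab, h, zero_mul])
    have hb0 : b ≠ 0 := fun h => hf0 (by rw [hab, h, mul_zero])
    set c := a.leadingCoeff with hc
    have hc0 : c ≠ 0 := leadingCoeff_ne_zero.mpr ha0
    set g : Fq[X] := C c⁻¹ * a with hgdef
    set h : Fq[X] := C c * b with hhdef
    have hCC : (C c⁻¹ : Fq[X]) * C c = 1 := by
      rw [← C_mul, inv_mul_cancel₀ hc0, C_1]
    have hgh : g * h = f := by
      calc g * h = (C c⁻¹ * C c) * (a * b) := by rw [hgdef, hhdef]; ring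
      _ = a * b := by rw [hCC, one_mul]
      _ = f := hab.symm
    have hg0 : g ≠ 0 := by
      intro hz; exact hf0 (by rw [← hgh, hz, zero_mul])
    have hh0 : h ≠ 0 := by
      intro hz; exact hf0 (by rw [← hgh, hz, mul_zero])
    have hgm : g.Monic := by
      show g.leadingCoeff = 1
      rw [hgdef, leadingCoeff_mul, leadingCoeff_C]
      exact inv_mul_cancel₀ hc0
    have hbl : b.leadingCoeff = c⁻¹ := by
      have h1 : f.leadingCoeff = 1 := hf
      rw [hab, leadingCoeff_mul, ← hc] at h1
      field_simp
      rw [mul_comm]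
      exact h1
    have hhm : h.Monic := by
      show h.leadingCoeff = 1
      rw [hhdef, leadingCoeff_mul, leadingCoeff_C, hbl]
      exact mul_inv_cancel₀ hc0
    have hng1 : 1 ≤ g.natDegree := by
      by_contra hlt
      have hg1 : g = 1 := hgm.natDegree_eq_zero.mp (by omega)
      have : a = C c := by
        have : C c * g = a := by
          rw [hgdef, ← mul_assoc, ← C_mul, mul_inv_cancel₀ hc0, C_1, one_mul]
        rw [← this, hg1, mul_one]
      exact hua (this ▸ (Polynomial.isUnit_C.mpr (isUnit_iff_ne_zero.mpr hc0)))
    have hnh1 : 1 ≤ h.natDegree := by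
      by_contra hlt
      have hh1 : h = 1 := hhm.natDegree_eq_zero.mp (by omega)
      have : b = C c⁻¹ := by
        have : C c⁻¹ * h = b := by
          rw [hhdef, ← mul_assoc, hCC, one_mul]
        rw [← this, hh1, mul_one]
      exact hub (this ▸ (Polynomial.isUnit_C.mpr (isUnit_iff_ne_zero.mpr (inv_ne_zero hc0))))
    have hnsum : g.natDegree + h.natDegree = n := by
      rw [← hfn, ← hgh, Polynomial.natDegree_mul hg0 hh0]
    have hsgh : Squarefree (g * h) := by rw [hgh]; exact hsf
    have hsg : Squarefree g := hsgh.squarefree_of_dvd (dvd_mul_right g h)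
    have hsh : Squarefree h := hsgh.squarefree_of_dvd (dvd_mul_left h g)
    have hcop : IsCoprime g h := by
      apply EuclideanDomain.gcd_isUnit_iff.mp
      apply hsf
      rw [← hgh]
      exact mul_dvd_mul (EuclideanDomain.gcd_dvd_left g h) (EuclideanDomain.gcd_dvd_right g h)
    -- root sets
    have haroots : f.aroots K = g.aroots K + h.aroots K := by
      rw [← hgh]
      exact Polynomial.aroots_mul (by rw [hgh]; exact hf0)
    have hsplit : (f.aroots K).toFinset = (g.aroots K).toFinset ∪ (h.aroots K).toFinset := by
      rw [haroots, Multiset.toFinset_add]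
    have hdisj : ∀ x : K, x ∈ (g.aroots K).toFinset → x ∈ (h.aroots K).toFinset → False := by
      intro x hxg hxh
      obtain ⟨u, v, huv⟩ := hcop
      have h1 := congrArg (aeval x) huv
      simp only [map_add, map_mul, (mem_rootFinset.mp hxg).2, (mem_rootFinset.mp hxh).2,
        mul_zero, add_zero, map_one, zero_add] at h1
      exact zero_ne_one h1
    -- the invariant predicate
    set p : {x : K // x ∈ (f.aroots K).toFinset} → Prop :=
      fun x => (x : K) ∈ (g.aroots K).toFinset with hpdef
    have hstab : ∀ x, p x ↔ p (σ x) := by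
      intro x
      constructor
      · intro hx
        show ((σ x : K)) ∈ _
        rw [hσ x]
        exact rootFinset_stable hq hx
      · intro hx
        by_contra hxg
        have hxh : (x : K) ∈ (h.aroots K).toFinset :=
          (Finset.mem_union.mp ((Finset.ext_iff.mp hsplit _).mp x.2)).resolve_left hxg
        have : ((σ x : K)) ∈ (h.aroots K).toFinset := by
          rw [hσ x]; exact rootFinset_stable hq hxh
        exact hdisj _ hx this
    set σg' := σ.subtypePerm (fun x => (hstab x).symm) with hσg'
    set σh' := σ.subtypePerm (p := fun x => ¬ p x) (fun x => (not_congr (hstab x)).symm) with hσh'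
    have hdecomp : σ = Equiv.Perm.ofSubtype σg' * Equiv.Perm.ofSubtype σh' :=
      sign_decomp σ p hstab
    -- transport to the root-set subtypes
    have hmemg : ∀ y : K, y ∈ (g.aroots K).toFinset → y ∈ (f.aroots K).toFinset := by
      intro y hy; rw [hsplit]; exact Finset.mem_union_left _ hy
    have hmemh : ∀ y : K, y ∈ (h.aroots K).toFinset → y ∈ (f.aroots K).toFinset := by
      intro y hy; rw [hsplit]; exact Finset.mem_union_right _ hy
    let eg : {x : {y : K // y ∈ (f.aroots K).toFinset} // p x} ≃ {y : K // y ∈ (g.aroots K).toFinset} :=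
      { toFun := fun x => ⟨x.1.1, x.2⟩
        invFun := fun y => ⟨⟨y.1, hmemg y.1 y.2⟩, y.2⟩
        left_inv := fun x => Subtype.ext (Subtype.ext rfl)
        right_inv := fun y => rfl }
    let eh : {x : {y : K // y ∈ (f.aroots K).toFinset} // ¬ p x} ≃ {y : K // y ∈ (h.aroots K).toFinset} :=
      { toFun := fun x => ⟨x.1.1,
          (Finset.mem_union.mp ((Finset.ext_iff.mp hsplit _).mp x.1.2)).resolve_left x.2⟩
        invFun := fun y => ⟨⟨y.1, hmemh y.1 y.2⟩, fun hc => hdisj y.1 hc y.2⟩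
        left_inv := fun x => Subtype.ext (Subtype.ext rfl)
        right_inv := fun y => rfl }
    set σg := eg.permCongr σg' with hσgdef
    set σh := eh.permCongr σh' with hσhdef
    have hσg : ∀ y, ((σg y : K)) = (y : K) ^ q := by
      intro y
      have h1 : ((σg y : K)) = ((σ (eg.symm y) : K)) := rfl
      rw [h1, hσ]
      rfl
    have hσh : ∀ y, ((σh y : K)) = (y : K) ^ q := by
      intro y
      have h1 : ((σh y : K)) = ((σ (eh.symm y) : K)) := rfl
      rw [h1, hσ]
      rfl
    have hIHg := IH g.natDegree (by omega) g hgm rfl hng1 hsg σg hσg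
    have hIHh := IH h.natDegree (by omega) h hhm rfl hnh1 hsh σh hσh
    have hsigng : Equiv.Perm.sign σg = Equiv.Perm.sign σg' := Equiv.Perm.sign_permCongr eg σg'
    have hsignh : Equiv.Perm.sign σh = Equiv.Perm.sign σh' := Equiv.Perm.sign_permCongr eh σh'
    have hs : Equiv.Perm.sign σ = Equiv.Perm.sign σg * Equiv.Perm.sign σh := by
      rw [hdecomp, map_mul, Equiv.Perm.sign_ofSubtype, Equiv.Perm.sign_ofSubtype,
        hsigng, hsignh]
    calc ffMoebius f = ffMoebius (g * h) := by rw [hgh]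
      _ = ffMoebius g * ffMoebius h := ffMoebius_mul hg0 hh0 hsgh
      _ = ((-1) ^ g.natDegree * (Equiv.Perm.sign σg : ℤ)) *
          ((-1) ^ h.natDegree * (Equiv.Perm.sign σh : ℤ)) := by rw [hIHg, hIHh]
      _ = (-1) ^ n * (Equiv.Perm.sign σ : ℤ) := by
          rw [hs, ← hnsum, pow_add]
          push_cast
          ring

end Aux

open Classical in
theorem stmt_16 (Fq : Type) [Field Fq] [Fintype Fq] (q : ℕ) (hq : q = Fintype.card Fq)
    (n : ℕ) (hn : 1 ≤ n) (f : Fq[X]) (hf : f.Monic) (hfn : f.natDegree = n)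
    (hsf : Squarefree f)
    (σ : Equiv.Perm {x : AlgebraicClosure Fq // x ∈ (f.aroots (AlgebraicClosure Fq)).toFinset})
    (hσ : ∀ x, ((σ x : AlgebraicClosure Fq)) = (x : AlgebraicClosure Fq) ^ q) :
    ffMoebius f = (-1) ^ n * (Equiv.Perm.sign σ : ℤ) := by
  exact key_induction q hq n f hf hfn hn hsf σ hσ
end

section
/- Let 𝔽_q be a finite field, let f ∈ 𝔽_q[T] be a monic polynomial of degree n ≥ 1, let S ⊆ 𝔽̄_q be the (finite, nonempty) set of distinct roots of f in a fixed algebraic closure 𝔽̄_q, and let σ : S → S be the permutation x ↦ x^q. Let W be the ℂ-vector space of functions g : S → ℂ with Σ_{x∈S} g(x) = 0, and let T_σ : W → W be the linear automorphism g ↦ g ∘ σ. Then Λ(f) = det(id_W − T_σ). -/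
open Polynomial


noncomputable def cycMat (m : ℕ) : Matrix (Fin m) (Fin m) ℂ :=
  fun i j => if (j : ℕ) = 0 then (if (i : ℕ) = 0 then 2 else 1)
    else if (i : ℕ) = (j : ℕ) then 1 else if (i : ℕ) + 1 = (j : ℕ) then -1 else 0

lemma neg_one_pow_self_add (k : ℕ) : ((-1 : ℂ)) ^ (k + k) = 1 :=
  (neg_one_pow_eq_one_iff_even (by norm_num)).2 ⟨k, rfl⟩

lemma cycMat_det : ∀ m : ℕ, (cycMat (m + 1)).det = (m + 2 : ℂ) := by
  intro m
  induction m with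
  | zero =>
    rw [Matrix.det_fin_one]
    norm_num [cycMat]
  | succ m ih =>
    rw [Matrix.det_succ_row _ (Fin.last (m + 1))]
    have hlast0 : ((Fin.last (m + 1) : Fin (m + 2)) : ℕ) ≠ 0 := by simp
    rw [Finset.sum_eq_add_of_mem (0 : Fin (m + 2)) (Fin.last (m + 1))
      (Finset.mem_univ _) (Finset.mem_univ _)
      (by simp [Fin.ext_iff]) ?_]
    · -- the two remaining terms
      have e1 : cycMat (m + 2) (Fin.last (m + 1)) 0 = 1 := by
        simp only [cycMat, Fin.val_zero, if_pos rfl, if_neg hlast0]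
        norm_num
      have e2 : cycMat (m + 2) (Fin.last (m + 1)) (Fin.last (m + 1)) = 1 := by
        simp only [cycMat, if_neg hlast0, if_pos rfl]
        norm_num
      rw [e1, e2]
      -- first submatrix : lower triangular with diagonal -1
      have hsub1 : ((cycMat (m + 2)).submatrix (Fin.last (m + 1)).succAbove
          (0 : Fin (m + 2)).succAbove).det = (-1 : ℂ) ^ (m + 1) := by
        have htri : ((cycMat (m + 2)).submatrix (Fin.last (m + 1)).succAbove
            (0 : Fin (m + 2)).succAbove).BlockTriangular ⇑OrderDual.toDual := by
          intro i j hij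
          have hij' : (i : ℕ) < (j : ℕ) := hij
          simp only [Matrix.submatrix_apply, Fin.succAbove_last, Fin.zero_succAbove, cycMat,
            Fin.val_succ, Fin.coe_castSucc]
          simp [show ¬ ((j : ℕ) + 1 = 0) by omega, show ¬ ((i : ℕ) = (j : ℕ) + 1) by omega,
            show ¬ ((i : ℕ) = (j : ℕ)) by omega]
        rw [Matrix.det_of_lowerTriangular _ htri]
        have hdiag : ∀ i : Fin (m + 1), ((cycMat (m + 2)).submatrix
            (Fin.last (m + 1)).succAbove (0 : Fin (m + 2)).succAbove) i i = -1 := by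
          intro i
          simp only [Matrix.submatrix_apply, Fin.succAbove_last, Fin.zero_succAbove, cycMat,
            Fin.val_succ, Fin.coe_castSucc]
          rw [if_neg (by omega), if_neg (by omega)]
          norm_num
        rw [Finset.prod_congr rfl (fun i _ => hdiag i)]
        simp
      -- second submatrix : cycMat (m+1)
      have hsub2 : ((cycMat (m + 2)).submatrix (Fin.last (m + 1)).succAbove
          (Fin.last (m + 1)).succAbove) = cycMat (m + 1) := by
        funext i j
        simp only [Matrix.submatrix_apply, Fin.succAbove_last, cycMat, Fin.coe_castSucc]
      rw [hsub1, hsub2, ih]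
      simp only [Fin.val_last, Fin.val_zero, add_zero, mul_one, one_mul,
        ← pow_add, neg_one_pow_self_add]
      push_cast
      ring
    · -- other terms vanish
      intro j _ hj
      obtain ⟨hj0, hjl⟩ := hj
      have hj0' : (j : ℕ) ≠ 0 := fun h => hj0 (Fin.ext (by simpa using h))
      have hjl' : (j : ℕ) ≠ m + 1 := fun h => hjl (Fin.ext (by simpa using h))
      have hentry : cycMat (m + 2) (Fin.last (m + 1)) j = 0 := by
        have hjlt := j.isLt
        simp only [cycMat, Fin.val_last]
        rw [if_neg hj0', if_neg (by omega), if_neg (by omega)]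
      rw [hentry]
      ring


lemma det_id_sub_T_eq_zero {S : Type} [Fintype S] (σ : Equiv.Perm S)
    (W : Submodule ℂ (S → ℂ)) (hW : ∀ g : S → ℂ, g ∈ W ↔ ∑ x, g x = 0)
    (T : W →ₗ[ℂ] W) (hT : ∀ g : W, ∀ x, ((T g : S → ℂ) x) = (g : S → ℂ) (σ x))
    (c : S → Prop) (hinv : ∀ x, c (σ x) ↔ c x)
    (x1 : S) (hx1 : c x1) (x2 : S) (hx2 : ¬ c x2) :
    LinearMap.det (LinearMap.id - T) = 0 := by
  classical
  set A := Finset.univ.filter c with hA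
  set B := Finset.univ.filter (fun x => ¬ c x) with hB
  set g : S → ℂ := fun x => if c x then (B.card : ℂ) else -(A.card : ℂ) with hg
  have hgW : g ∈ W := by
    rw [hW]
    rw [Finset.sum_ite, Finset.sum_const, Finset.sum_const]
    simp only [nsmul_eq_mul, ← hA, ← hB]
    ring
  set gW : W := ⟨g, hgW⟩ with hgWdef
  have hfix : (LinearMap.id - T : W →ₗ[ℂ] W) gW = 0 := by
    have : T gW = gW := by
      apply Subtype.ext
      funext y
      rw [hT gW y]
      show g (σ y) = g y
      exact if_congr (hinv y) rfl rfl
    rw [LinearMap.sub_apply, LinearMap.id_apply, this, sub_self]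
  have hgW0 : gW ≠ 0 := by
    intro h
    have : g x1 = 0 := by
      rw [hgWdef] at h
      have := congrFun (congrArg (fun (v : W) => (v : S → ℂ)) h) x1
      simpa using this
    rw [hg] at this
    simp only [if_pos hx1] at this
    have hBcard : B.card ≠ 0 := by
      intro h0
      have : x2 ∈ B := by simp [hB, hx2]
      rw [Finset.card_eq_zero] at h0
      simp [h0] at this
    exact hBcard (Nat.cast_eq_zero.mp this)
  by_contra hdet
  have := (LinearMap.equivOfDetNeZero _ hdet).injective
  have h0 : (LinearMap.equivOfDetNeZero _ hdet) gW =
      (LinearMap.equivOfDetNeZero _ hdet) 0 := by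
    show (LinearMap.id - T : W →ₗ[ℂ] W) gW = (LinearMap.id - T : W →ₗ[ℂ] W) 0
    rw [hfix, map_zero]
  exact hgW0 (this h0)

lemma det_id_sub_T_trans {S : Type} [Fintype S] (σ : Equiv.Perm S)
    (W : Submodule ℂ (S → ℂ)) (hW : ∀ g : S → ℂ, g ∈ W ↔ ∑ x, g x = 0)
    (T : W →ₗ[ℂ] W) (hT : ∀ g : W, ∀ x, ((T g : S → ℂ) x) = (g : S → ℂ) (σ x))
    (x₀ : S) (htrans : ∀ y : S, ∃ k : ℕ, (σ ^ k) x₀ = y) :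
    LinearMap.det (LinearMap.id - T) = (Fintype.card S : ℂ) := by
  classical
  have hne : Nonempty S := ⟨x₀⟩
  -- rank computation
  have hrank : 1 + Module.finrank ℂ W = Fintype.card S := by
    set φ : (S → ℂ) →ₗ[ℂ] ℂ := ∑ x : S, LinearMap.proj x with hφ
    have hφapp : ∀ g : S → ℂ, φ g = ∑ x, g x := by
      intro g
      rw [hφ, LinearMap.sum_apply]
      rfl
    have hker : W = LinearMap.ker φ := by
      ext g
      rw [LinearMap.mem_ker, hφapp, hW]
    have hsurj : Function.Surjective φ := by
      intro z
      refine ⟨fun _ => z / (Fintype.card S : ℂ), ?_⟩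
      rw [hφapp, Finset.sum_const, Finset.card_univ, nsmul_eq_mul]
      field_simp
    have := LinearMap.finrank_range_add_finrank_ker φ
    rw [LinearMap.range_eq_top.2 hsurj, finrank_top, Module.finrank_self,
      Module.finrank_fintype_fun_eq_card, ← hker] at this
    exact this
  -- basic orbit lemmas
  have hfixpow : ∀ c : ℕ, (σ ^ c) x₀ = x₀ → ∀ j : ℕ, ((σ ^ c) ^ j) x₀ = x₀ := by
    intro c hc j
    induction j with
    | zero => simp
    | succ j ih => rw [pow_succ, Equiv.Perm.mul_apply, hc, ih]
  have hL2 : ∀ c : ℕ, 0 < c → (σ ^ c) x₀ = x₀ → Fintype.card S ≤ c := by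
    intro c hc hfix
    have hsurj : Function.Surjective (fun k : Fin c => (σ ^ (k : ℕ)) x₀) := by
      intro y
      obtain ⟨k, hk⟩ := htrans y
      refine ⟨⟨k % c, Nat.mod_lt _ hc⟩, ?_⟩
      show (σ ^ (k % c)) x₀ = y
      have : (σ ^ (k % c)) x₀ = (σ ^ k) x₀ := by
        conv_rhs => rw [← Nat.mod_add_div k c]
        rw [pow_add, Equiv.Perm.mul_apply, pow_mul, hfixpow c hfix]
      rw [this, hk]
    simpa using Fintype.card_le_of_surjective _ hsurj
  have hcancel : ∀ a b : ℕ, a < b → (σ ^ a) x₀ = (σ ^ b) x₀ → (σ ^ (b - a)) x₀ = x₀ := by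
    intro a b hab heq
    apply (σ ^ a).injective
    rw [← Equiv.Perm.mul_apply, ← pow_add]
    rw [Nat.add_sub_cancel' (le_of_lt hab)]
    exact heq.symm
  have hL3 : (σ ^ Fintype.card S) x₀ = x₀ := by
    obtain ⟨a, b, hab, habe⟩ := Fintype.exists_ne_map_eq_of_card_lt
      (fun k : Fin (Fintype.card S + 1) => (σ ^ (k : ℕ)) x₀) (by simp)
    have key : ∀ a b : Fin (Fintype.card S + 1), (a : ℕ) < (b : ℕ) →
        (σ ^ (a : ℕ)) x₀ = (σ ^ (b : ℕ)) x₀ → (σ ^ Fintype.card S) x₀ = x₀ := by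
      intro a b hlt heq
      have h1 := hcancel _ _ hlt heq
      have h2 := hL2 _ (by omega) h1
      have h3 : (b : ℕ) - (a : ℕ) = Fintype.card S := by
        have := b.isLt
        omega
      rw [← h3]
      exact h1
    rcases Nat.lt_or_ge (a : ℕ) (b : ℕ) with h | h
    · exact key a b h habe
    · have h' : (b : ℕ) < (a : ℕ) := by
        rcases Nat.lt_or_ge (b : ℕ) (a : ℕ) with h2 | h2
        · exact h2
        · exact absurd (Fin.ext (le_antisymm h2 h)) hab
      exact key b a h' habe.symm
  -- case on the dimension
  cases hMeq : Module.finrank ℂ W with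
  | zero =>
    rw [hMeq] at hrank
    have hsub : Subsingleton W := Module.finrank_zero_iff.mp hMeq
    have : (LinearMap.id - T : W →ₗ[ℂ] W) = LinearMap.id := Subsingleton.elim _ _
    rw [this, LinearMap.det_id, ← hrank]
    norm_num
  | succ M =>
    rw [hMeq] at hrank
    have hcard : Fintype.card S = M + 2 := by omega
    have hL3' : (σ ^ (M + 2)) x₀ = x₀ := by rw [← hcard]; exact hL3
    -- the orbit enumeration
    set x : Fin (M + 2) → S := fun k => (σ ^ (k : ℕ)) x₀ with hx
    have hxinj : Function.Injective x := by
      intro a b hab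
      by_contra hne
      have key : ∀ a b : Fin (M + 2), (a : ℕ) < (b : ℕ) →
          (σ ^ (a : ℕ)) x₀ = (σ ^ (b : ℕ)) x₀ → False := by
        intro a b hlt heq
        have h1 := hcancel _ _ hlt heq
        have h2 := hL2 _ (by omega) h1
        have := b.isLt
        omega
      rcases Nat.lt_or_ge (a : ℕ) (b : ℕ) with h | h
      · exact key a b h hab
      · have h' : (b : ℕ) < (a : ℕ) := by
          rcases Nat.lt_or_ge (b : ℕ) (a : ℕ) with h2 | h2
          · exact h2
          · exact absurd (Fin.ext (le_antisymm h2 h)) hne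
        exact key b a h' hab.symm
    have hstep : ∀ a b : Fin (M + 2), (b : ℕ) = (a : ℕ) + 1 → σ (x a) = x b := by
      intro a b hb
      show σ ((σ ^ (a : ℕ)) x₀) = (σ ^ (b : ℕ)) x₀
      rw [hb, pow_succ', Equiv.Perm.mul_apply]
    have hwrap : σ (x (Fin.last (M + 1))) = x 0 := by
      show σ ((σ ^ ((Fin.last (M + 1) : Fin (M + 2)) : ℕ)) x₀) = (σ ^ ((0 : Fin (M + 2)) : ℕ)) x₀
      rw [Fin.val_last, Fin.val_zero, pow_zero, Equiv.Perm.one_apply,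
        ← Equiv.Perm.mul_apply, ← pow_succ']
      exact hL3'
    -- delta functions
    set δ : Fin (M + 2) → (S → ℂ) := fun k y => if y = x k then 1 else 0 with hδ
    have hδshift : ∀ (k k' : Fin (M + 2)), σ (x k') = x k →
        ∀ y : S, δ k (σ y) = δ k' y := by
      intro k k' hk y
      show (if σ y = x k then (1 : ℂ) else 0) = if y = x k' then 1 else 0
      refine if_congr ⟨fun h => ?_, fun h => ?_⟩ rfl rfl
      · exact σ.injective (by rw [h, hk])
      · rw [h, hk]
    have hδx : ∀ k j : Fin (M + 2), δ k (x j) = if j = k then 1 else 0 := by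
      intro k j
      show (if x j = x k then (1 : ℂ) else 0) = if j = k then 1 else 0
      exact if_congr ⟨fun h => hxinj h, fun h => by rw [h]⟩ rfl rfl
    have hδsum : ∀ k : Fin (M + 2), ∑ y : S, δ k y = 1 := by
      intro k
      show (∑ y : S, if y = x k then (1 : ℂ) else 0) = 1
      rw [Finset.sum_ite_eq' Finset.univ (x k) (fun _ => (1 : ℂ))]
      simp
    -- the basis family
    set bfun : Fin (M + 1) → (S → ℂ) := fun i => δ i.castSucc - δ i.succ with hbfun
    have hbW : ∀ i, bfun i ∈ W := by
      intro i
      rw [hW]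
      show (∑ y : S, (δ i.castSucc y - δ i.succ y)) = 0
      rw [Finset.sum_sub_distrib, hδsum, hδsum, sub_self]
    set b : Fin (M + 1) → W := fun i => ⟨bfun i, hbW i⟩ with hb
    -- linear independence via partial sums
    set Φ : (S → ℂ) →ₗ[ℂ] (Fin (M + 1) → ℂ) := LinearMap.pi (fun k =>
      ∑ j ∈ Finset.univ.filter (fun j : Fin (M + 2) => (j : ℕ) ≤ (k : ℕ)),
        LinearMap.proj (x j)) with hΦ
    have hΦapp : ∀ (g : S → ℂ) (k : Fin (M + 1)), Φ g k =
        ∑ j ∈ Finset.univ.filter (fun j : Fin (M + 2) => (j : ℕ) ≤ (k : ℕ)), g (x j) := by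
      intro g k
      rw [hΦ, LinearMap.pi_apply, LinearMap.sum_apply]
      rfl
    have hδpsum : ∀ (a : Fin (M + 2)) (k : Fin (M + 1)),
        (∑ j ∈ Finset.univ.filter (fun j : Fin (M + 2) => (j : ℕ) ≤ (k : ℕ)), δ a (x j))
        = if (a : ℕ) ≤ (k : ℕ) then 1 else 0 := by
      intro a k
      have : ∀ j : Fin (M + 2), δ a (x j) = if j = a then (1 : ℂ) else 0 := fun j => hδx a j
      rw [Finset.sum_congr rfl (fun j _ => this j),
        Finset.sum_ite_eq' _ a (fun _ => (1 : ℂ))]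
      simp [Finset.mem_filter]
    have hΦb : ∀ i : Fin (M + 1), Φ (bfun i) =
        fun k : Fin (M + 1) => if k = i then (1 : ℂ) else 0 := by
      intro i
      funext k
      rw [hΦapp]
      show (∑ j ∈ Finset.univ.filter (fun j : Fin (M + 2) => (j : ℕ) ≤ (k : ℕ)),
        (δ i.castSucc (x j) - δ i.succ (x j))) = _
      rw [Finset.sum_sub_distrib, hδpsum, hδpsum, Fin.coe_castSucc, Fin.val_succ]
      have hiff : k = i ↔ (k : ℕ) = (i : ℕ) := Fin.ext_iff
      by_cases h1 : (i : ℕ) ≤ (k : ℕ)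
      · by_cases h2 : (i : ℕ) + 1 ≤ (k : ℕ)
        · rw [if_pos h1, if_pos h2, if_neg (by omega : ¬ k = i)]
          ring
        · rw [if_pos h1, if_neg h2, if_pos (by rw [hiff]; omega)]
          ring
      · rw [if_neg h1, if_neg (by omega), if_neg (by rw [hiff]; omega)]
        ring
    have hli : LinearIndependent ℂ b := by
      apply LinearIndependent.of_comp (Φ ∘ₗ W.subtype)
      have : (⇑(Φ ∘ₗ W.subtype) ∘ b) = fun i : Fin (M + 1) =>
          (fun k : Fin (M + 1) => if k = i then (1 : ℂ) else 0) := by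
        funext i
        show Φ (bfun i) = _
        exact hΦb i
      rw [this]
      have hstd := (Pi.basisFun ℂ (Fin (M + 1))).linearIndependent
      have hstdeq : ⇑(Pi.basisFun ℂ (Fin (M + 1))) = fun i : Fin (M + 1) =>
          (fun k : Fin (M + 1) => if k = i then (1 : ℂ) else 0) := by
        funext i k
        rw [Pi.basisFun_apply]
        simp [Pi.single_apply]
      rwa [hstdeq] at hstd
    have hcardind : Fintype.card (Fin (M + 1)) = Module.finrank ℂ W := by
      rw [Fintype.card_fin, hMeq]
    set bas : Module.Basis (Fin (M + 1)) ℂ W := basisOfLinearIndependentOfCardEqFinrank hli hcardind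
      with hbas
    have hbasc : ∀ i, bas i = b i := by
      intro i
      rw [hbas, coe_basisOfLinearIndependentOfCardEqFinrank]
    -- the matrix identity
    have hTco : ∀ i : Fin (M + 1), ((T (b i) : S → ℂ)) = fun y => bfun i (σ y) := by
      intro i
      funext y
      exact hT (b i) y
    -- telescoping sum
    have htel : (∑ i : Fin (M + 1), bfun i) = δ 0 - δ (Fin.last (M + 1)) := by
      set G : ℕ → (S → ℂ) := fun t => if h : t < M + 2 then δ ⟨t, h⟩ else 0 with hG
      have h1 : ∀ i : Fin (M + 1), bfun i = G (i : ℕ) - G ((i : ℕ) + 1) := by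
        intro i
        have hlt1 : (i : ℕ) < M + 2 := by omega
        have hlt2 : (i : ℕ) + 1 < M + 2 := by have := i.isLt; omega
        simp only [hG]
        rw [dif_pos hlt1, dif_pos hlt2]
        show δ i.castSucc - δ i.succ = _
        congr 1
      rw [Finset.sum_congr rfl (fun i _ => h1 i),
        Fin.sum_univ_eq_sum_range (fun t => G t - G (t + 1)) (M + 1),
        Finset.sum_range_sub' G (M + 1)]
      simp only [hG]
      have e0 : (0 : ℕ) < M + 2 := by omega
      have e1 : M + 1 < M + 2 := by omega
      rw [dif_pos e0, dif_pos e1]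
      congr 1
    have key : (LinearMap.id - T : W →ₗ[ℂ] W) = Matrix.toLin bas bas (cycMat (M + 1)) := by
      apply bas.ext
      intro j
      rw [Matrix.toLin_self]
      rw [hbasc j]
      apply Subtype.ext
      have hRHS : ((∑ i : Fin (M + 1), cycMat (M + 1) i j • bas i : W) : S → ℂ)
          = ∑ i : Fin (M + 1), cycMat (M + 1) i j • bfun i := by
        rw [Submodule.coe_sum]
        refine Finset.sum_congr rfl (fun i _ => ?_)
        rw [SetLike.val_smul, hbasc i]
      rw [hRHS]
      have hLHS : (((LinearMap.id - T : W →ₗ[ℂ] W) (b j) : W) : S → ℂ)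
          = bfun j - fun y => bfun j (σ y) := by
        rw [LinearMap.sub_apply, LinearMap.id_apply]
        rw [Submodule.coe_sub, hTco j]
      rw [hLHS]
      -- case on the column
      induction j using Fin.cases with
      | zero =>
        have hA : (fun y => bfun 0 (σ y)) =
            δ (Fin.last (M + 1)) - δ (Fin.castSucc 0) := by
          funext y
          show δ (Fin.castSucc 0) (σ y) - δ (Fin.succ 0) (σ y) = _
          rw [hδshift (Fin.castSucc 0) (Fin.last (M + 1)) (by rw [hwrap, Fin.castSucc_zero]) y,
            hδshift (Fin.succ 0) (Fin.castSucc 0) (hstep _ _ (by simp)) y]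
          rfl
        have hsplit : ∀ i : Fin (M + 1), cycMat (M + 1) i 0 • bfun i
            = bfun i + (if i = 0 then bfun i else 0) := by
          intro i
          by_cases hi : i = 0
          · subst hi
            show cycMat (M + 1) 0 0 • bfun 0 = _
            have : cycMat (M + 1) 0 0 = 2 := by simp [cycMat]
            rw [this, if_pos rfl, two_smul]
          · have hival : (i : ℕ) ≠ 0 := fun h => hi (Fin.ext (by simpa using h))
            have : cycMat (M + 1) i 0 = 1 := by
              simp [cycMat, hival]
            rw [this, one_smul, if_neg hi, add_zero]
        rw [Finset.sum_congr rfl (fun i _ => hsplit i), Finset.sum_add_distrib,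
          Finset.sum_ite_eq' Finset.univ (0 : Fin (M + 1)) bfun, if_pos (Finset.mem_univ _),
          htel, hA, Fin.castSucc_zero]
        abel
      | succ jp =>
        have hA : (fun y => bfun jp.succ (σ y)) =
            δ (jp.castSucc.castSucc) - δ (jp.succ.castSucc) := by
          funext y
          show δ (jp.succ.castSucc) (σ y) - δ (jp.succ.succ) (σ y) = _
          rw [hδshift (jp.succ.castSucc) (jp.castSucc.castSucc)
              (hstep _ _ (by simp)) y,
            hδshift (jp.succ.succ) (jp.succ.castSucc) (hstep _ _ (by simp)) y]
          rfl
        have hsplit : ∀ i : Fin (M + 1), cycMat (M + 1) i jp.succ • bfun i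
            = (if i = jp.succ then bfun i else 0) + (if i = jp.castSucc then -bfun i else 0) := by
          intro i
          have hjval : ((jp.succ : Fin (M + 1)) : ℕ) = (jp : ℕ) + 1 := Fin.val_succ jp
          have hne : jp.succ ≠ jp.castSucc := by
            intro h
            rw [Fin.ext_iff] at h
            simp at h
          by_cases hi1 : i = jp.succ
          · have hival : (i : ℕ) = (jp : ℕ) + 1 := by rw [hi1, hjval]
            have hentry : cycMat (M + 1) i jp.succ = 1 := by
              simp only [cycMat, hjval]
              rw [if_neg (by omega), if_pos hival]
            rw [hentry, one_smul, if_pos hi1, if_neg (by rw [hi1]; exact hne), add_zero]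
          · by_cases hi2 : i = jp.castSucc
            · have hival : (i : ℕ) = (jp : ℕ) := by rw [hi2, Fin.coe_castSucc]
              have hentry : cycMat (M + 1) i jp.succ = -1 := by
                simp only [cycMat, hjval]
                rw [if_neg (by omega), if_neg (by omega), if_pos (by omega)]
              rw [hentry, if_neg hi1, if_pos hi2, neg_one_smul, zero_add]
            · have hival1 : (i : ℕ) ≠ (jp : ℕ) + 1 := by
                intro h
                exact hi1 (Fin.ext (by rw [hjval]; exact h))
              have hival2 : (i : ℕ) ≠ (jp : ℕ) := by
                intro h
                exact hi2 (Fin.ext (by rw [Fin.coe_castSucc]; exact h))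
              have : cycMat (M + 1) i jp.succ = 0 := by
                simp only [cycMat, hjval]
                rw [if_neg (by omega), if_neg (by omega), if_neg (by omega)]
              rw [this, zero_smul, if_neg hi1, if_neg hi2, add_zero]
        rw [Finset.sum_congr rfl (fun i _ => hsplit i), Finset.sum_add_distrib,
          Finset.sum_ite_eq' Finset.univ jp.succ bfun, if_pos (Finset.mem_univ _),
          Finset.sum_ite_eq' Finset.univ jp.castSucc (fun i => -bfun i),
          if_pos (Finset.mem_univ _), hA]
        show (δ jp.succ.castSucc - δ jp.succ.succ) - _
          = (δ jp.succ.castSucc - δ jp.succ.succ) + -(δ jp.castSucc.castSucc - δ jp.castSucc.succ)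
        rw [Fin.succ_castSucc]
        abel
    rw [key, LinearMap.det_toLin, cycMat_det M, hcard]
    push_cast
    ring


open Classical in
/-- The function-field von Mangoldt function: `deg π` if `f = π ^ r` with `π` monic
irreducible and `r ≥ 1`, and `0` otherwise.  (The monic irreducible `π` is unique
when it exists, so `Classical.choose` picks it out.) -/
noncomputable def ffVonMangoldt {Fq : Type} [Field Fq] (f : Fq[X]) : ℕ :=
  if h : ∃ π : Fq[X], (π.Monic ∧ Irreducible π) ∧ ∃ r : ℕ, 1 ≤ r ∧ f = π ^ r then
    (Classical.choose h).natDegree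
  else 0

open Classical in
theorem stmt_17 (Fq : Type) [Field Fq] [Fintype Fq] (q : ℕ) (hq : q = Fintype.card Fq)
    (n : ℕ) (hn : 1 ≤ n) (f : Fq[X]) (hf : f.Monic) (hfn : f.natDegree = n)
    (σ : Equiv.Perm {x : AlgebraicClosure Fq // x ∈ (f.aroots (AlgebraicClosure Fq)).toFinset})
    (hσ : ∀ x, ((σ x : AlgebraicClosure Fq)) = (x : AlgebraicClosure Fq) ^ q)
    (W : Submodule ℂ
      ({x : AlgebraicClosure Fq // x ∈ (f.aroots (AlgebraicClosure Fq)).toFinset} → ℂ))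
    (hW : W = LinearMap.ker
      (∑ x : {x : AlgebraicClosure Fq // x ∈ (f.aroots (AlgebraicClosure Fq)).toFinset},
        LinearMap.proj (R := ℂ) (φ := fun _ => ℂ) x))
    (T : W →ₗ[ℂ] W)
    (hT : ∀ g : W, ∀ x, ((T g : _ → ℂ) x) = (g : _ → ℂ) (σ x)) :
    (ffVonMangoldt f : ℂ) = LinearMap.det (LinearMap.id - T) := by
  classical
  have hWmem : ∀ g : {x : AlgebraicClosure Fq // x ∈ (f.aroots (AlgebraicClosure Fq)).toFinset}
      → ℂ, g ∈ W ↔ ∑ x, g x = 0 := by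
    intro g
    rw [hW, LinearMap.mem_ker, LinearMap.sum_apply]
    simp only [LinearMap.proj_apply]
  have hq2 : 1 < q := by rw [hq]; exact Fintype.one_lt_card
  have hq0 : q ≠ 0 := by omega
  have hfne : f ≠ 0 := hf.ne_zero
  -- Frobenius set-up
  set K := AlgebraicClosure Fq with hK
  set p := ringChar Fq with hpdef
  have hp : p.Prime := CharP.char_is_prime Fq p
  haveI : Fact p.Prime := ⟨hp⟩
  haveI hKp : CharP K p := charP_of_injective_algebraMap (algebraMap Fq K).injective p
  haveI : ExpChar K p := .prime hp
  obtain ⟨e, -, hqcard⟩ := FiniteField.card Fq p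
  have hqe : q = p ^ (e : ℕ) := by rw [hq, hqcard]
  have hψ : ∀ (c : ℕ) (z : K), iterateFrobenius K p ((e : ℕ) * c) z = z ^ q ^ c := by
    intro c z
    rw [iterateFrobenius_def, hqe, ← pow_mul]
  have haeval : ∀ (g : Fq[X]) (z : K) (c : ℕ),
      aeval (z ^ q ^ c) g = (aeval z g) ^ q ^ c := by
    intro g z c
    have hcomp : (iterateFrobenius K p ((e : ℕ) * c)).comp (algebraMap Fq K)
        = algebraMap Fq K := by
      ext a
      rw [RingHom.comp_apply, hψ, ← map_pow]
      congr 1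
      rw [hq]
      exact FiniteField.pow_card_pow c a
    have h2 := hom_eval₂ g (algebraMap Fq K) (iterateFrobenius K p ((e : ℕ) * c)) z
    rw [hcomp, hψ, hψ] at h2
    rw [aeval_def, aeval_def]
    exact h2.symm
  have hσpow : ∀ (y : {x : K // x ∈ (f.aroots K).toFinset}) (k : ℕ),
      (((σ ^ k) y : {x : K // x ∈ (f.aroots K).toFinset}) : K) = (y : K) ^ q ^ k := by
    intro y k
    induction k with
    | zero => simp
    | succ k ih =>
      rw [pow_succ' σ k, Equiv.Perm.mul_apply, hσ, ih, ← pow_mul, ← pow_succ]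
  by_cases hpp : ∃ π : Fq[X], (π.Monic ∧ Irreducible π) ∧ ∃ r : ℕ, 1 ≤ r ∧ f = π ^ r
  · -- prime power case
    obtain ⟨π, ⟨hπm, hπi⟩, r, hr1, hfr⟩ := hpp
    have hval : ffVonMangoldt f = π.natDegree := by
      unfold ffVonMangoldt
      rw [dif_pos ⟨π, ⟨hπm, hπi⟩, r, hr1, hfr⟩]
      set h : ∃ π : Fq[X], (π.Monic ∧ Irreducible π) ∧ ∃ r : ℕ, 1 ≤ r ∧ f = π ^ r :=
        ⟨π, ⟨hπm, hπi⟩, r, hr1, hfr⟩ with hh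
      obtain ⟨⟨hm', hi'⟩, r', hr1', hfr'⟩ := Classical.choose_spec h
      have hdvd : Classical.choose h ∣ π ^ r := by
        have h2 : Classical.choose h ∣ Classical.choose h ^ r' :=
          dvd_pow_self _ (by omega)
        have h3 : Classical.choose h ^ r' = π ^ r := by
          rw [← hfr']
          exact hfr
        rwa [h3] at h2
      have hdvdπ : Classical.choose h ∣ π :=
        ((UniqueFactorizationMonoid.irreducible_iff_prime.mp hi').dvd_of_dvd_pow hdvd)
      have hassoc : Associated (Classical.choose h) π :=
        hi'.associated_of_dvd hπi hdvdπ
      exact congrArg Polynomial.natDegree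
        (Polynomial.eq_of_monic_of_associated hm' hπm hassoc)
    set d := π.natDegree with hddef
    have hd1 : 1 ≤ d := hπi.natDegree_pos
    have memS : ∀ z : K, z ∈ (f.aroots K).toFinset ↔ aeval z π = 0 := by
      intro z
      rw [Multiset.mem_toFinset, Polynomial.mem_aroots]
      constructor
      · rintro ⟨-, hz⟩
        rw [hfr, map_pow, pow_eq_zero_iff (by omega : r ≠ 0)] at hz
        exact hz
      · intro hz
        refine ⟨hfne, ?_⟩
        rw [hfr, map_pow, hz, zero_pow (by omega : r ≠ 0)]
    have hcardS : Fintype.card {x : K // x ∈ (f.aroots K).toFinset} = d := by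
      have h1 : (f.aroots K).toFinset = (π.aroots K).toFinset := by
        ext z
        rw [memS, Multiset.mem_toFinset, Polynomial.mem_aroots]
        exact ⟨fun h => ⟨hπi.ne_zero, h⟩, fun h => h.2⟩
      rw [Fintype.card_coe, h1]
      have hsep : π.Separable := PerfectField.separable_of_irreducible hπi
      rw [Multiset.toFinset_card_of_nodup (Polynomial.nodup_roots hsep.map)]
      have hsplit : Splits (π.map (algebraMap Fq K)) :=
        IsAlgClosed.splits _
      rw [Polynomial.splits_iff_card_roots.mp hsplit, Polynomial.natDegree_map]
    have hSne : Nonempty {x : K // x ∈ (f.aroots K).toFinset} := by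
      rw [← Fintype.card_pos_iff, hcardS]; omega
    obtain ⟨x₀⟩ := hSne
    have hx₀root : aeval (x₀ : K) π = 0 := (memS _).mp x₀.2
    have hintegral : IsIntegral Fq (x₀ : K) := ⟨π, hπm, by rwa [← aeval_def]⟩
    have hπmin : π = minpoly Fq (x₀ : K) :=
      minpoly.eq_of_irreducible_of_monic hπi hx₀root hπm
    haveI := IntermediateField.adjoin.finiteDimensional hintegral
    haveI : Finite (IntermediateField.adjoin Fq {(x₀ : K)}) :=
      Module.finite_of_finite Fq
    haveI : Fintype (IntermediateField.adjoin Fq {(x₀ : K)}) := Fintype.ofFinite _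
    have hcardF : Fintype.card (IntermediateField.adjoin Fq {(x₀ : K)}) = q ^ d := by
      rw [Module.card_eq_pow_finrank (K := Fq), IntermediateField.adjoin.finrank hintegral,
        ← hπmin, hq]
    have hA : (x₀ : K) ^ q ^ d = (x₀ : K) := by
      have hx₀F : (x₀ : K) ∈ IntermediateField.adjoin Fq {(x₀ : K)} :=
        IntermediateField.mem_adjoin_simple_self Fq (x₀ : K)
      have h2 := FiniteField.pow_card
        (⟨(x₀ : K), hx₀F⟩ : IntermediateField.adjoin Fq {(x₀ : K)})
      rw [hcardF] at h2
      calc (x₀ : K) ^ q ^ d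
          = ((⟨(x₀ : K), hx₀F⟩ ^ q ^ d : IntermediateField.adjoin Fq {(x₀ : K)}) : K) := by
            rw [SubmonoidClass.coe_pow]
        _ = (x₀ : K) := by rw [h2]
    -- injectivity of the Frobenius orbit
    have hBinj : ∀ a b : ℕ, a < b → b < d → (x₀ : K) ^ q ^ a ≠ (x₀ : K) ^ q ^ b := by
      intro a b hab hbd heq
      have hc1 : 0 < b - a := by omega
      have hcd : b - a < d := by omega
      set c := b - a with hcdef
      have hx₀c : (x₀ : K) ^ q ^ c = (x₀ : K) := by
        apply (iterateFrobenius K p ((e : ℕ) * a)).injective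
        rw [hψ, hψ, ← pow_mul, ← pow_add]
        have : c + a = b := by omega
        rw [this]
        exact heq.symm
      -- every element of the adjoin field is fixed
      have hfixall : ∀ z ∈ IntermediateField.adjoin Fq {(x₀ : K)}, z ^ q ^ c = z := by
        intro z hz
        have hψc : ∀ w : K, iterateFrobenius K p ((e : ℕ) * c) w = w ^ q ^ c := hψ c
        refine IntermediateField.adjoin_induction Fq (s := {(x₀ : K)})
          (p := fun t _ => t ^ q ^ c = t)
          (fun t ht => ?_) (fun a => ?_) (fun u v hu hv hu' hv' => ?_)
          (fun u hu hu' => ?_) (fun u v hu hv hu' hv' => ?_) hz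
        · rw [Set.mem_singleton_iff] at ht
          rw [ht]
          exact hx₀c
        · show (algebraMap Fq K a) ^ q ^ c = algebraMap Fq K a
          rw [← map_pow]
          congr 1
          rw [hq]
          exact FiniteField.pow_card_pow c a
        · show (u + v) ^ q ^ c = u + v
          rw [← hψc (u + v), map_add, hψc, hψc, hu', hv']
        · show (u⁻¹) ^ q ^ c = u⁻¹
          rw [inv_pow, hu']
        · show (u * v) ^ q ^ c = u * v
          rw [mul_pow, hu', hv']
      -- count roots of X ^ q ^ c - X
      set P : K[X] := X ^ q ^ c - X with hP
      have hqc : q ^ c = p ^ ((e : ℕ) * c) := by rw [hqe, ← pow_mul]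
      have hec : (e : ℕ) * c ≠ 0 := by
        have := e.pos
        positivity
      have hPne : P ≠ 0 := by
        rw [hP, hqc]
        exact FiniteField.X_pow_card_pow_sub_X_ne_zero K hec hp.one_lt
      have hPdeg : P.natDegree = q ^ c := by
        rw [hP, hqc]
        exact FiniteField.X_pow_card_pow_sub_X_natDegree_eq K hec hp.one_lt
      have hroot : ∀ z : IntermediateField.adjoin Fq {(x₀ : K)},
          (z : K) ∈ P.roots.toFinset := by
        intro z
        rw [Multiset.mem_toFinset, Polynomial.mem_roots hPne]
        show P.IsRoot (z : K)
        rw [hP, Polynomial.IsRoot, Polynomial.eval_sub, Polynomial.eval_pow,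
          Polynomial.eval_X, hfixall (z : K) z.2, sub_self]
      have hinjF : Function.Injective
          (fun z : IntermediateField.adjoin Fq {(x₀ : K)} =>
            (⟨(z : K), hroot z⟩ : {w : K // w ∈ P.roots.toFinset})) := by
        intro z w h
        apply Subtype.ext
        exact congrArg (Subtype.val : {w : K // w ∈ P.roots.toFinset} → K) h
      have hle := Fintype.card_le_of_injective _ hinjF
      rw [hcardF, Fintype.card_coe] at hle
      have hle2 : P.roots.toFinset.card ≤ q ^ c :=
        le_trans (Multiset.toFinset_card_le _) (le_trans (Polynomial.card_roots' P)
          (le_of_eq hPdeg))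
      have : q ^ d ≤ q ^ c := le_trans hle hle2
      have : d ≤ c := (pow_le_pow_iff_right₀ hq2).mp this
      omega
    -- the orbit map is surjective
    have hsurj : ∀ y : {x : K // x ∈ (f.aroots K).toFinset},
        ∃ k : ℕ, (σ ^ k) x₀ = y := by
      have hmemk : ∀ k : ℕ, (x₀ : K) ^ q ^ k ∈ (f.aroots K).toFinset := by
        intro k
        rw [memS, haeval, hx₀root, zero_pow (pow_ne_zero k hq0)]
      set xk : Fin d → {x : K // x ∈ (f.aroots K).toFinset} :=
        fun k => ⟨(x₀ : K) ^ q ^ (k : ℕ), hmemk k⟩ with hxk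
      have hxkinj : Function.Injective xk := by
        intro a b hab
        by_contra hne
        have hvne : (a : ℕ) ≠ (b : ℕ) := fun h => hne (Fin.ext h)
        have hval : (x₀ : K) ^ q ^ (a : ℕ) = (x₀ : K) ^ q ^ (b : ℕ) :=
          congrArg Subtype.val hab
        rcases Nat.lt_or_ge (a : ℕ) (b : ℕ) with h | h
        · exact hBinj _ _ h b.isLt hval
        · have h' : (b : ℕ) < (a : ℕ) := by omega
          exact hBinj _ _ h' a.isLt hval.symm
      have hxkbij : Function.Bijective xk :=
        (Fintype.bijective_iff_injective_and_card xk).mpr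
          ⟨hxkinj, by rw [Fintype.card_fin, hcardS]⟩
      intro y
      obtain ⟨k, hk⟩ := hxkbij.surjective y
      refine ⟨(k : ℕ), ?_⟩
      apply Subtype.ext
      rw [hσpow x₀ (k : ℕ), ← hk]
    rw [hval, det_id_sub_T_trans σ W hWmem T hT x₀ hsurj, hcardS]
  · -- not a prime power : von Mangoldt is zero and the map is not injective
    unfold ffVonMangoldt
    rw [dif_neg hpp, Nat.cast_zero]
    symm
    -- find two distinct monic irreducible factors
    set fs := UniqueFactorizationMonoid.normalizedFactors f with hfs
    have hfsne : fs ≠ 0 := by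
      intro h
      have hassoc := UniqueFactorizationMonoid.prod_normalizedFactors hfne
      rw [← hfs, h, Multiset.prod_zero] at hassoc
      have : IsUnit f := hassoc.isUnit isUnit_one
      have := Polynomial.natDegree_eq_zero_of_isUnit this
      omega
    have hmonic : ∀ a ∈ fs, Polynomial.Monic a := by
      intro a ha
      have h1 := UniqueFactorizationMonoid.normalize_normalized_factor a ha
      have h2 := UniqueFactorizationMonoid.irreducible_of_normalized_factor a ha
      have h3 := Polynomial.monic_normalize (p := a) (by
        intro h0
        rw [h0] at h2
        exact not_irreducible_zero h2)
      rwa [h1] at h3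
    have hirr : ∀ a ∈ fs, Irreducible a :=
      fun a ha => UniqueFactorizationMonoid.irreducible_of_normalized_factor a ha
    obtain ⟨π₁, hπ₁mem⟩ := Multiset.exists_mem_of_ne_zero hfsne
    have hexists2 : ∃ π₂ ∈ fs, π₂ ≠ π₁ := by
      by_contra hall
      push_neg at hall
      apply hpp
      have hrep : fs = Multiset.replicate (Multiset.card fs) π₁ :=
        Multiset.eq_replicate_card.mpr hall
      have hassoc := UniqueFactorizationMonoid.prod_normalizedFactors hfne
      rw [← hfs, hrep, Multiset.prod_replicate] at hassoc
      have hcard1 : 1 ≤ Multiset.card fs := Multiset.card_pos.mpr hfsne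
      refine ⟨π₁, ⟨hmonic π₁ hπ₁mem, hirr π₁ hπ₁mem⟩, Multiset.card fs, hcard1, ?_⟩
      exact (Polynomial.eq_of_monic_of_associated ((hmonic π₁ hπ₁mem).pow _) hf hassoc).symm
    obtain ⟨π₂, hπ₂mem, hπ₂ne⟩ := hexists2
    have hcop : IsCoprime π₁ π₂ := by
      rw [(hirr π₁ hπ₁mem).coprime_iff_not_dvd]
      intro hdvd
      have hassoc := (hirr π₁ hπ₁mem).associated_of_dvd (hirr π₂ hπ₂mem) hdvd
      exact hπ₂ne (Polynomial.eq_of_monic_of_associated (hmonic π₂ hπ₂mem)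
        (hmonic π₁ hπ₁mem) hassoc.symm)
    -- roots of the two factors
    have hroot : ∀ a ∈ fs, ∃ ρ : K, aeval ρ a = 0 ∧ ρ ∈ (f.aroots K).toFinset := by
      intro a ha
      have hdeg : (a.map (algebraMap Fq K)).degree ≠ 0 := by
        have h1 : 0 < (a.map (algebraMap Fq K)).natDegree := by
          rw [Polynomial.natDegree_map]
          exact (hirr a ha).natDegree_pos
        exact ne_of_gt (Polynomial.natDegree_pos_iff_degree_pos.mp h1)
      obtain ⟨ρ, hρ⟩ := IsAlgClosed.exists_root _ hdeg
      have haρ : aeval ρ a = 0 := by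
        rwa [Polynomial.IsRoot, Polynomial.eval_map, ← aeval_def] at hρ
      refine ⟨ρ, haρ, ?_⟩
      rw [Multiset.mem_toFinset, Polynomial.mem_aroots]
      refine ⟨hfne, ?_⟩
      obtain ⟨t, ht⟩ := UniqueFactorizationMonoid.dvd_of_mem_normalizedFactors ha
      rw [ht, map_mul, haρ, zero_mul]
    obtain ⟨ρ₁, haρ₁, hmem₁⟩ := hroot π₁ hπ₁mem
    obtain ⟨ρ₂, haρ₂, hmem₂⟩ := hroot π₂ hπ₂mem
    refine det_id_sub_T_eq_zero σ W hWmem T hT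
      (fun y => aeval (y : K) π₁ = 0) ?_ ⟨ρ₁, hmem₁⟩ haρ₁ ⟨ρ₂, hmem₂⟩ ?_
    · intro y
      show aeval ((σ y : {x : K // x ∈ (f.aroots K).toFinset}) : K) π₁ = 0 ↔ _
      rw [hσ y]
      have : (y : K) ^ q = (y : K) ^ q ^ 1 := by rw [pow_one]
      rw [this, haeval, pow_eq_zero_iff (pow_ne_zero 1 hq0)]
    · intro h0
      obtain ⟨u, v, huv⟩ := hcop
      have := congrArg (aeval ρ₂) huv
      rw [map_add, map_mul, map_mul, h0, haρ₂, mul_zero, mul_zero, add_zero,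
        map_one] at this
      exact zero_ne_one this
end
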